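/- arXiv:1911.12594 — 13 statements merged into one kernel-verified Lean document; each statement's English description precedes it below -/
import Mathlib

section
/- Let G be a finite group such that every proper subgroup H of G not contained in the Frattini subgroup Φ(G) satisfies G = HK for some proper subgroup K of G. Then G is solvable. -/
open scoped Pointwise

open Subgroup

/-- The factorization hypothesis. -/
private def FactHyp (G : Type*) [Group G] : Prop :=
  ∀ H : Subgroup G, H ≠ ⊤ → ¬ H ≤ frattini G →
    ∃ K : Subgroup G, K ≠ ⊤ ∧ (H : Set G) * (K : Set G) = Set.univ

/-- A subgroup whose index is the smallest prime dividing the order of the group is normal. -/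
private lemma normal_of_index_eq_minFac {G : Type*} [Group G] [Finite G] {K : Subgroup G}
    (h2 : Nat.card G ≠ 1) (hK : K.index = (Nat.card G).minFac) : K.Normal := by
  set q := (Nat.card G).minFac with hq
  have hqp : q.Prime := Nat.minFac_prime h2
  have hle : K.normalCore ≤ K := normalCore_le K
  have hrel : (K.normalCore.relIndex K) * K.index = K.normalCore.index :=
    relIndex_mul_index hle
  have hdvdfac : K.normalCore.index ∣ Nat.factorial q := by
    rw [normalCore_eq_ker, index_ker]
    have hcard : Nat.card (G ⧸ K) = q := by rw [← index_eq_card, hK]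
    have hperm : Nat.card (Equiv.Perm (G ⧸ K)) = Nat.factorial q := by
      haveI : DecidableEq (G ⧸ K) := Classical.decEq _
      haveI : Fintype (G ⧸ K) := Fintype.ofFinite _
      rw [Nat.card_eq_fintype_card, Fintype.card_perm, ← Nat.card_eq_fintype_card, hcard]
    rw [← hperm]
    exact Subgroup.card_subgroup_dvd_card _
  have hm : K.normalCore.relIndex K ∣ Nat.factorial (q - 1) := by
    have hq0 : 0 < q := hqp.pos
    have h1 : (K.normalCore.relIndex K) * q ∣ Nat.factorial q := by
      have h2 := hrel
      rw [hK] at h2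
      rw [h2]
      exact hdvdfac
    rw [← Nat.mul_factorial_pred hq0.ne', mul_comm q] at h1
    exact (Nat.mul_dvd_mul_iff_right hq0).mp h1
  have hm1 : K.normalCore.relIndex K = 1 := by
    by_contra hne
    have hpp : (K.normalCore.relIndex K).minFac.Prime := Nat.minFac_prime hne
    have hple : (K.normalCore.relIndex K).minFac ≤ q - 1 :=
      (Nat.Prime.dvd_factorial hpp).mp (dvd_trans (Nat.minFac_dvd _) hm)
    have hpdvdG : (K.normalCore.relIndex K).minFac ∣ Nat.card G := by
      refine dvd_trans (Nat.minFac_dvd _) (dvd_trans ?_ K.normalCore.index_dvd_card)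
      exact ⟨K.index, hrel.symm⟩
    have hqle : q ≤ (K.normalCore.relIndex K).minFac :=
      Nat.minFac_le_of_dvd hpp.two_le hpdvdG
    have := hqp.two_le
    omega
  have hKle : K ≤ K.normalCore := relIndex_eq_one.mp hm1
  have heq : K.normalCore = K := le_antisymm hle hKle
  rw [← heq]
  infer_instance

/-- The hypothesis is inherited by proper subgroups, when the Frattini subgroup is trivial. -/
private lemma factHyp_subgroup {G : Type*} [Group G] (hG : FactHyp G)
    (hfrat : frattini G = ⊥) (K : Subgroup G) (hK : K ≠ ⊤) : FactHyp ↥K := by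
  intro H' hH'top hH'frat
  have hH'bot : H' ≠ ⊥ := by
    rintro rfl
    exact hH'frat bot_le
  set H : Subgroup G := H'.map K.subtype with hHdef
  have hHK : H ≤ K := map_subtype_le H'
  have hHtop : H ≠ ⊤ := fun h => hK (top_le_iff.mp (h ▸ hHK))
  have hHbot : H ≠ ⊥ := by
    intro h
    have h2 := (Subgroup.map_eq_bot_iff H').mp h
    rw [ker_subtype, le_bot_iff] at h2
    exact hH'bot h2
  obtain ⟨L, hLtop, hLmul⟩ := hG H hHtop (by rw [hfrat]; exact fun h => hHbot (le_bot_iff.mp h))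
  refine ⟨L.subgroupOf K, ?_, ?_⟩
  · intro htop
    have hKL : K ≤ L := subgroupOf_eq_top.mp htop
    apply hLtop
    rw [eq_top_iff']
    intro g
    have hg : g ∈ (H : Set G) * (L : Set G) := by rw [hLmul]; trivial
    obtain ⟨a, ha, b, hb, rfl⟩ := hg
    exact L.mul_mem (hKL (hHK ha)) hb
  · ext ⟨g, hgK⟩
    simp only [Set.mem_univ, iff_true]
    have hg : g ∈ (H : Set G) * (L : Set G) := by rw [hLmul]; trivial
    obtain ⟨a, ha, b, hb, hab⟩ := hg
    have haK : a ∈ K := hHK ha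
    have hbK : b ∈ K := by
      have : b = a⁻¹ * g := by rw [← hab]; group
      rw [this]
      exact K.mul_mem (K.inv_mem haK) hgK
    refine ⟨⟨a, haK⟩, ?_, ⟨b, hbK⟩, ?_, ?_⟩
    · obtain ⟨a', ha', haa⟩ := ha
      have : (⟨a, haK⟩ : ↥K) = a' := by
        apply Subtype.ext
        exact haa.symm
      rw [this]
      exact ha'
    · exact hb
    · exact Subtype.ext hab

/-- The hypothesis is inherited by the quotient by the Frattini subgroup. -/
private lemma factHyp_quotient {G : Type*} [Group G] [Finite G] (hG : FactHyp G) :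
    FactHyp (G ⧸ frattini G) := by
  set φ := QuotientGroup.mk' (frattini G) with hφ
  have hsurj : Function.Surjective φ := QuotientGroup.mk'_surjective _
  intro H' hH'top hH'frat
  set H : Subgroup G := H'.comap φ with hHdef
  have hmapH : H.map φ = H' := map_comap_eq_self_of_surjective hsurj H'
  have hHtop : H ≠ ⊤ := by
    intro h
    apply hH'top
    rw [← hmapH, h, ← top_le_iff]
    intro g _
    obtain ⟨g', rfl⟩ := hsurj g
    exact ⟨g', trivial, rfl⟩
  have hHfrat : ¬ H ≤ frattini G := by
    intro hle
    apply hH'frat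
    rw [← hmapH]
    calc H.map φ ≤ (frattini G).map φ := map_mono hle
      _ ≤ frattini (G ⧸ frattini G) := by
          rw [map_le_iff_le_comap]
          exact frattini_le_comap_frattini_of_surjective hsurj
  obtain ⟨L, hLtop, hLmul⟩ := hG H hHtop hHfrat
  refine ⟨L.map φ, ?_, ?_⟩
  · intro htop
    obtain ⟨M, hM, hLM⟩ := (eq_top_or_exists_le_coatom L).resolve_left hLtop
    have hfratM : frattini G ≤ M := frattini_le_coatom hM
    have hcomap : (L.map φ).comap φ = L ⊔ frattini G := by
      rw [comap_map_eq, hφ, QuotientGroup.ker_mk']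
    have : (⊤ : Subgroup G) = L ⊔ frattini G := by
      rw [← hcomap, htop, comap_top]
    have htopM : (⊤ : Subgroup G) ≤ M := by
      rw [this]
      exact sup_le hLM hfratM
    exact hM.1 (top_le_iff.mp htopM)
  · have himg : ((H'.comap φ : Subgroup G) : Set G) = (φ : G → G ⧸ frattini G) ⁻¹' H' := rfl
    have hH'img : (H' : Set (G ⧸ frattini G)) = (φ : G → G ⧸ frattini G) '' (H : Set G) := by
      rw [hHdef]
      exact (Set.image_preimage_eq_of_subset (by
        intro x _
        obtain ⟨y, rfl⟩ := hsurj x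
        exact ⟨y, rfl⟩)).symm
    have hLimg : ((L.map φ : Subgroup (G ⧸ frattini G)) : Set (G ⧸ frattini G))
        = (φ : G → G ⧸ frattini G) '' (L : Set G) := coe_map _ _
    rw [hH'img, hLimg, ← Set.image_mul, hLmul, Set.image_univ,
      Set.range_eq_univ.mpr hsurj]

universe u

private lemma aux_solvable : ∀ (n : ℕ) (G : Type u) [Group G] [Finite G],
    Nat.card G ≤ n → FactHyp G → IsSolvable G := by
  intro n
  induction n using Nat.strong_induction_on with
  | _ n IH =>
    intro G _ _ hcard hhyp
    by_cases htriv : Nat.card G ≤ 1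
    · have h1 : Nat.card G = 1 := le_antisymm htriv Nat.card_pos
      haveI : Subsingleton G := (Nat.card_eq_one_iff_unique.mp h1).1
      exact isSolvable_of_comm fun a b => Subsingleton.elim _ _
    push_neg at htriv
    have hnontriv : Nontrivial G := Finite.one_lt_card_iff_nontrivial.mp htriv
    have hcardne1 : Nat.card G ≠ 1 := by omega
    by_cases hfrat : frattini G = ⊥
    · -- Frattini-trivial case
      set q := (Nat.card G).minFac with hq
      have hqp : q.Prime := Nat.minFac_prime hcardne1
      haveI : Fact q.Prime := ⟨hqp⟩
      obtain ⟨x, hx⟩ := exists_prime_orderOf_dvd_card' q (Nat.minFac_dvd _)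
      by_cases hxtop : Subgroup.zpowers x = ⊤
      · -- G is cyclic
        apply isSolvable_of_comm
        intro a b
        have ha : a ∈ Subgroup.zpowers x := hxtop ▸ Subgroup.mem_top a
        have hb : b ∈ Subgroup.zpowers x := hxtop ▸ Subgroup.mem_top b
        obtain ⟨m, rfl⟩ := ha
        obtain ⟨k, rfl⟩ := hb
        exact zpow_mul_comm x m k
      · have hxbot : Subgroup.zpowers x ≠ ⊥ := by
          intro h
          have : x = 1 := by
            have := Subgroup.mem_zpowers x
            rwa [h, Subgroup.mem_bot] at this
          rw [this, orderOf_one] at hx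
          exact hqp.one_lt.ne hx
        obtain ⟨K, hKtop, hKmul⟩ := hhyp (Subgroup.zpowers x) hxtop
          (by rw [hfrat]; exact fun h => hxbot (le_bot_iff.mp h))
        -- K has index q
        have hsurjquot : Function.Surjective
            (fun h : ↥(Subgroup.zpowers x) => (QuotientGroup.mk h.1 : G ⧸ K)) := by
          intro g
          obtain ⟨g', rfl⟩ := QuotientGroup.mk_surjective g
          have hg : g' ∈ (Subgroup.zpowers x : Set G) * (K : Set G) := by
            rw [hKmul]; trivial
          obtain ⟨a, ha, b, hb, rfl⟩ := hg
          exact ⟨⟨a, ha⟩, (QuotientGroup.mk_mul_of_mem a hb).symm⟩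
        have hidxle : K.index ≤ q := by
          rw [index_eq_card]
          calc Nat.card (G ⧸ K) ≤ Nat.card ↥(Subgroup.zpowers x) :=
                Nat.card_le_card_of_surjective _ hsurjquot
            _ = orderOf x := Nat.card_zpowers x
            _ = q := hx
        have hidxne1 : K.index ≠ 1 := fun h => hKtop (index_eq_one.mp h)
        have hidxdvd : K.index ∣ Nat.card G := K.index_dvd_card
        have hidx : K.index = q := by
          have h2 : 2 ≤ K.index := by
            have h0 : K.index ≠ 0 := index_ne_zero_of_finite
            omega
          exact le_antisymm hidxle (Nat.minFac_le_of_dvd h2 hidxdvd)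
        haveI hKnormal : K.Normal := normal_of_index_eq_minFac hcardne1 hidx
        -- quotient is cyclic of prime order
        have hquotcard : Nat.card (G ⧸ K) = q := by rw [← index_eq_card, hidx]
        haveI : IsCyclic (G ⧸ K) := isCyclic_of_prime_card hquotcard
        haveI hsolvquot : Group.IsSolvable (G ⧸ K) := by
          letI : CommGroup (G ⧸ K) := IsCyclic.commGroup
          exact isSolvable_of_comm mul_comm
        -- K is solvable by induction
        have hKcard : Nat.card ↥K < n := by
          have hmul : Nat.card ↥K * K.index = Nat.card G := K.card_mul_index
          have hq2 : 2 ≤ q := hqp.two_le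
          have hKpos : 0 < Nat.card ↥K := Nat.card_pos
          calc Nat.card ↥K < Nat.card ↥K * K.index := by
                rw [hidx]; exact lt_mul_of_one_lt_right hKpos (by omega)
            _ = Nat.card G := hmul
            _ ≤ n := hcard
        haveI hsolvK : Group.IsSolvable ↥K :=
          IH (Nat.card ↥K) hKcard ↥K le_rfl (factHyp_subgroup hhyp hfrat K hKtop)
        exact solvable_of_ker_le_range K.subtype (QuotientGroup.mk' K)
          (by rw [QuotientGroup.ker_mk', range_subtype])
    · -- Frattini-nontrivial case
      have hfratcard : 1 < Nat.card ↥(frattini G) := ((frattini G).one_lt_card_iff_ne_bot).mpr hfrat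
      have hquotcard : Nat.card (G ⧸ frattini G) < n := by
        have hmul : Nat.card ↥(frattini G) * (frattini G).index = Nat.card G := (frattini G).card_mul_index
        have hidxpos : 0 < (frattini G).index := Nat.pos_of_ne_zero index_ne_zero_of_finite
        have : (frattini G).index < Nat.card G := by
          calc (frattini G).index < Nat.card ↥(frattini G) * (frattini G).index := by
                exact lt_mul_of_one_lt_left hidxpos hfratcard
            _ = Nat.card G := hmul
        rw [← index_eq_card]
        omega
      haveI hsolvquot : Group.IsSolvable (G ⧸ frattini G) :=
        IH (Nat.card (G ⧸ frattini G)) hquotcard (G ⧸ frattini G) le_rfl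
          (factHyp_quotient hhyp)
      haveI hsolvfrat : Group.IsSolvable ↥(frattini G) := by
        haveI := frattini_nilpotent (G := G)
        infer_instance
      exact solvable_of_ker_le_range (frattini G).subtype (QuotientGroup.mk' (frattini G))
        (by rw [QuotientGroup.ker_mk', range_subtype])

theorem solvable_of_factorizes_on_nonfrattini_subgroups
    (G : Type*) [Group G] [Finite G]
    (h : ∀ H : Subgroup G, H ≠ ⊤ → ¬ H ≤ frattini G →
      ∃ K : Subgroup G, K ≠ ⊤ ∧ (H : Set G) * (K : Set G) = Set.univ) :
    IsSolvable G := by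
  exact aux_solvable (Nat.card G) G le_rfl h
end

section
/- Let G be a finite group with |G/Φ(G)| = p₁⋯pₙ a product of primes p₁ ≤ ⋯ ≤ pₙ. Suppose M₁,…,Mₙ are maximal subgroups of G with [G : Mᵢ] = pᵢ for each i and M₁ ∩ ⋯ ∩ Mₙ = Φ(G). Then for every permutation π of {1,…,n} and every 1 ≤ i < n, the index [M_{π(1)} ∩ ⋯ ∩ M_{π(i)} : M_{π(1)} ∩ ⋯ ∩ M_{π(i)} ∩ M_{π(i+1)}] equals p_{π(i+1)}. -/
theorem relindex_of_maximal_subgroups_meeting_in_frattini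
    (G : Type*) [Group G] [Finite G] (n : ℕ) (p : Fin n → ℕ)
    (hprime : ∀ i, (p i).Prime) (hmono : Monotone p)
    (hcard : Nat.card (G ⧸ frattini G) = ∏ i, p i)
    (M : Fin n → Subgroup G)
    (hmax : ∀ i, IsCoatom (M i)) (hindex : ∀ i, (M i).index = p i)
    (hinf : (⨅ i, M i) = frattini G) :
    ∀ π : Equiv.Perm (Fin n), ∀ i : Fin n, 0 < (i : ℕ) →
      (M (π i)).relIndex (⨅ k : Fin n, ⨅ _ : k < i, M (π k)) = p (π i) := by
  intro π i _
  classical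
  -- the partial intersections
  set N : ℕ → Subgroup G := fun m => ⨅ k : Fin n, ⨅ _ : (k : ℕ) < m, M (π k) with hN
  set f : Fin n → ℕ := fun j => (M (π j)).relIndex (N (j : ℕ)) with hf
  have hfin : ∀ H : Subgroup G, Finite (G ⧸ H) := fun H => inferInstance
  have hindex_ne : ∀ H : Subgroup G, H.index ≠ 0 := fun H =>
    Subgroup.index_ne_zero_of_finite
  have hrel_ne : ∀ (H K : Subgroup G), H.relIndex K ≠ 0 := by
    intro H K
    exact Subgroup.index_ne_zero_of_finite
  -- each f j ≤ p (π j)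
  have hle : ∀ j : Fin n, f j ≤ p (π j) := by
    intro j
    have := Subgroup.relIndex_le_of_le_right (H := M (π j)) (K := N (j : ℕ)) (L := ⊤)
      le_top (by rw [Subgroup.relIndex_top_right]; exact hindex_ne _)
    rwa [Subgroup.relIndex_top_right, hindex] at this
  -- step equation
  have hstep : ∀ m : ℕ, ∀ h : m < n,
      (N (m + 1)).index = f ⟨m, h⟩ * (N m).index := by
    intro m h
    have hNm : N (m + 1) = M (π ⟨m, h⟩) ⊓ N m := by
      rw [hN]
      apply le_antisymm
      · refine le_inf ?_ (le_iInf fun k => le_iInf fun hk => ?_)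
        · exact iInf_le_of_le ⟨m, h⟩ (iInf_le_of_le (Nat.lt_succ_self m) le_rfl)
        · exact iInf_le_of_le k (iInf_le_of_le (by omega) le_rfl)
      · refine le_iInf fun k => le_iInf fun hk => ?_
        rcases Nat.lt_succ_iff_lt_or_eq.mp hk with hk' | hk'
        · exact inf_le_right.trans (iInf_le_of_le k (iInf_le_of_le hk' le_rfl))
        · have : k = ⟨m, h⟩ := Fin.ext hk'
          rw [this]; exact inf_le_left
    have hle' : N (m + 1) ≤ N m := by rw [hNm]; exact inf_le_right
    have := Subgroup.relIndex_mul_index hle'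
    rw [← this, hNm, Subgroup.inf_relIndex_right]
  -- index of N m is the product of f over j < m
  have hprod : ∀ m : ℕ, m ≤ n →
      (N m).index = ∏ j ∈ Finset.univ.filter (fun j : Fin n => (j : ℕ) < m), f j := by
    intro m
    induction m with
    | zero =>
      intro _
      simp only [Nat.not_lt_zero, Finset.filter_false, Finset.prod_empty]
      have : N 0 = ⊤ := by
        rw [hN]; simp
      rw [this, Subgroup.index_top]
    | succ m ih =>
      intro hm
      have hmn : m < n := hm
      rw [hstep m hmn, ih (le_of_lt hmn)]
      have hset : Finset.univ.filter (fun j : Fin n => (j : ℕ) < m + 1)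
          = insert ⟨m, hmn⟩ (Finset.univ.filter (fun j : Fin n => (j : ℕ) < m)) := by
        ext j
        simp only [Finset.mem_filter, Finset.mem_univ, true_and, Finset.mem_insert,
          Fin.ext_iff]
        omega
      rw [hset, Finset.prod_insert (by simp)]
  -- at m = n, N n is the frattini subgroup
  have hNn : N n = frattini G := by
    rw [hN, ← hinf, ← Equiv.iInf_comp (g := M) π]
    exact iInf_congr fun k => by simp [k.isLt]
  have htotal : ∏ j : Fin n, f j = ∏ j : Fin n, p (π j) := by
    have h1 := hprod n le_rfl
    have hfil : Finset.univ.filter (fun j : Fin n => (j : ℕ) < n) = Finset.univ := by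
      ext j; simp [j.isLt]
    rw [hfil, hNn] at h1
    have h2 : (frattini G).index = Nat.card (G ⧸ frattini G) := rfl
    rw [h2, hcard] at h1
    rw [← h1, Equiv.prod_comp π p]
  -- positivity
  have hpos : ∀ j : Fin n, 0 < f j := fun j => Nat.pos_of_ne_zero (hrel_ne _ _)
  -- conclude pointwise equality
  by_contra hne
  have hlt : f i < p (π i) := lt_of_le_of_ne (hle i) (by exact hne)
  have : ∏ j : Fin n, f j < ∏ j : Fin n, p (π j) :=
    Finset.prod_lt_prod (fun j _ => hpos j) (fun j _ => hle j)
      ⟨i, Finset.mem_univ i, hlt⟩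
  omega
end

section
/- Let G be a finite group and suppose Φ(G) is the intersection of maximal subgroups M₁,…,Mₘ whose indices in G are p₁ ≤ ⋯ ≤ pₘ, the prime divisors (with multiplicity) of |G/Φ(G)|. Then every proper subgroup H of G not contained in Φ(G) satisfies G = H·Mᵢ for some i ∈ {1,…,m}. -/
open scoped Pointwise

theorem factorizes_with_some_maximal_of_frattini_intersection
    (G : Type*) [Group G] [Finite G] (m : ℕ) (p : Fin m → ℕ)
    (hprime : ∀ i, (p i).Prime) (hmono : Monotone p)
    (hcard : Nat.card (G ⧸ frattini G) = ∏ i, p i)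
    (M : Fin m → Subgroup G)
    (hmax : ∀ i, IsCoatom (M i)) (hindex : ∀ i, (M i).index = p i)
    (hinf : (⨅ i, M i) = frattini G) :
    ∀ H : Subgroup G, H ≠ ⊤ → ¬ H ≤ frattini G →
      ∃ i : Fin m, (H : Set G) * (M i : Set G) = Set.univ := by
  classical
  intro H _ hHfr
  set Φ := frattini G with hΦdef
  have hΦle : ∀ i, Φ ≤ M i := fun i => frattini_le_coatom (hmax i)
  set H' := H ⊔ Φ with hH'def
  have hΦH' : Φ ≤ H' := le_sup_right
  -- the frattini subgroup has index ∏ p i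
  have hfi : Φ.index = ∏ i, p i := by
    rw [Subgroup.index_eq_card]; exact hcard
  set T : Finset (Fin m) := Finset.univ.filter (fun i => H ≤ M i) with hTdef
  -- Tᶜ is nonempty
  have hTc : Tᶜ.Nonempty := by
    by_contra h
    apply hHfr
    rw [← hinf]
    refine le_iInf fun i => ?_
    by_contra hc
    exact h ⟨i, Finset.mem_compl.mpr (by simp [hTdef, hc])⟩
  set k := Tᶜ.min' hTc with hkdef
  have hk : k ∈ Tᶜ := Tᶜ.min'_mem hTc
  have hkmin : ∀ i ∈ Tᶜ, k ≤ i := fun i hi => Tᶜ.min'_le i hi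
  have hHk : ¬ H ≤ M k := by
    have := Finset.mem_compl.mp hk
    simpa [hTdef] using this
  have hH'k : ¬ H' ≤ M k := fun h => hHk (le_sup_left.trans h)
  -- the two partial intersections
  set L : Subgroup G := ⨅ i : T, M i with hLdef
  set L' : Subgroup G := ⨅ i : ↥(Tᶜ), M i with hL'def
  have hsplit : (⨅ i, M i) = L ⊓ L' := by
    apply le_antisymm
    · exact le_inf (le_iInf fun i => iInf_le _ _) (le_iInf fun i => iInf_le _ _)
    · refine le_iInf fun i => ?_
      by_cases hi : i ∈ T
      · exact inf_le_left.trans (iInf_le _ (⟨i, hi⟩ : T))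
      · exact inf_le_right.trans (iInf_le _ (⟨i, Finset.mem_compl.mpr hi⟩ : ↥(Tᶜ)))
  have hLle : L.index ≤ ∏ i ∈ T, p i := by
    have h := Subgroup.index_iInf_le (fun i : T => M i)
    simp only [hindex] at h
    calc L.index ≤ ∏ i : T, p i := h
      _ = ∏ i ∈ T, p i := Finset.prod_coe_sort T p
  have hL'le : L'.index ≤ ∏ i ∈ Tᶜ, p i := by
    have h := Subgroup.index_iInf_le (fun i : ↥(Tᶜ) => M i)
    simp only [hindex] at h
    calc L'.index ≤ ∏ i : ↥(Tᶜ), p i := h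
      _ = ∏ i ∈ Tᶜ, p i := Finset.prod_coe_sort Tᶜ p
  have hTpos : 0 < ∏ i ∈ T, p i :=
    Finset.prod_pos fun i _ => (hprime i).pos
  have hTcpos : 0 < ∏ i ∈ Tᶜ, p i :=
    Finset.prod_pos fun i _ => (hprime i).pos
  have hprodsplit : (∏ i ∈ T, p i) * ∏ i ∈ Tᶜ, p i = ∏ i, p i :=
    Finset.prod_mul_prod_compl T p
  have hge : (∏ i ∈ T, p i) * ∏ i ∈ Tᶜ, p i ≤ L.index * L'.index := by
    rw [hprodsplit, ← hfi, ← hinf, hsplit]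
    exact Subgroup.index_inf_le
  -- deduce L.index = ∏ i ∈ T, p i
  have hLindex : L.index = ∏ i ∈ T, p i := by
    by_contra hne
    have hlt : L.index < ∏ i ∈ T, p i := lt_of_le_of_ne hLle hne
    have : L.index * L'.index < (∏ i ∈ T, p i) * ∏ i ∈ Tᶜ, p i :=
      Nat.mul_lt_mul_of_lt_of_le hlt hL'le hTcpos
    omega
  -- Φ ≤ L, H' ≤ L
  have hΦL : Φ ≤ L := le_iInf fun i => hΦle _
  have hH'L : H' ≤ L := by
    refine sup_le (le_iInf fun i => ?_) hΦL
    exact (Finset.mem_filter.mp i.2).2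
  -- relindex of Φ in L
  have hrelL : Φ.relIndex L = ∏ i ∈ Tᶜ, p i := by
    have h1 : Φ.relIndex L * L.index = Φ.index := Subgroup.relIndex_mul_index hΦL
    rw [hLindex, hfi, ← hprodsplit, mul_comm (∏ i ∈ T, p i)] at h1
    exact Nat.eq_of_mul_eq_mul_right hTpos h1
  -- the key quantity r
  set r := (M k).relIndex H' with hrdef
  have hr1 : r ≠ 1 := fun h => hH'k (Subgroup.relIndex_eq_one.mp h)
  have hrle : r ≤ p k := by
    have h0 : (M k).relIndex ⊤ ≠ 0 := by
      rw [Subgroup.relIndex_top_right]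
      exact Subgroup.index_ne_zero_of_finite
    have := Subgroup.relIndex_le_of_le_right (le_top : H' ≤ ⊤) h0
    rwa [Subgroup.relIndex_top_right, hindex] at this
  have hrdvd1 : r ∣ Φ.relIndex H' := by
    refine Subgroup.index_dvd_of_le ?_
    intro x hx
    exact Subgroup.mem_subgroupOf.mpr (hΦle k (Subgroup.mem_subgroupOf.mp hx))
  have hrdvd2 : Φ.relIndex H' ∣ Φ.relIndex L :=
    ⟨H'.relIndex L, (Subgroup.relIndex_mul_relIndex Φ H' L hΦH' hH'L).symm⟩
  have hrdvd : r ∣ ∏ i ∈ Tᶜ, p i := hrelL ▸ hrdvd1.trans hrdvd2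
  have hr0 : r ≠ 0 := fun h => by rw [h] at hrdvd; omega
  -- r = p k
  obtain ⟨q, hq, hqr⟩ := Nat.exists_prime_and_dvd hr1
  have hqprod : q ∣ ∏ i ∈ Tᶜ, p i := hqr.trans hrdvd
  obtain ⟨i, hi, hqi⟩ := hq.prime.exists_mem_finset_dvd hqprod
  have hqeq : q = p i := (Nat.prime_dvd_prime_iff_eq hq (hprime i)).mp hqi
  have hpk_le : p k ≤ q := hqeq ▸ hmono (hkmin i hi)
  have hq_le : q ≤ r := Nat.le_of_dvd (Nat.pos_of_ne_zero hr0) hqr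
  have hreq : r = p k := le_antisymm hrle (hpk_le.trans hq_le)
  -- build the bijection between quotients
  let ψ : H' ⧸ ((M k).subgroupOf H') → G ⧸ (M k) :=
    Quotient.map' Subtype.val (fun a b hab => by
      rw [QuotientGroup.leftRel_apply] at hab ⊢
      simpa [Subgroup.mem_subgroupOf] using hab)
  have hinj : Function.Injective ψ := by
    intro x y
    refine Quotient.inductionOn₂' x y fun a b h => ?_
    simp only [ψ, Quotient.map'_mk''] at h
    rw [Quotient.eq'', QuotientGroup.leftRel_apply] at h ⊢
    simpa [Subgroup.mem_subgroupOf] using h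
  have hcards : Nat.card (H' ⧸ ((M k).subgroupOf H')) = Nat.card (G ⧸ (M k)) := by
    rw [← Subgroup.index_eq_card, ← Subgroup.index_eq_card]
    have : ((M k).subgroupOf H').index = r := rfl
    rw [this, hreq, hindex]
  have hsurj : Function.Surjective ψ :=
    ((Nat.bijective_iff_injective_and_card ψ).mpr ⟨hinj, hcards⟩).2
  -- conclude
  refine ⟨k, ?_⟩
  ext g
  simp only [Set.mem_univ, iff_true]
  obtain ⟨x, hx⟩ := hsurj (QuotientGroup.mk g : G ⧸ M k)
  revert hx
  refine Quotient.inductionOn' x fun h' hx => ?_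
  have hx' : (Quotient.mk'' ((h' : G)) : G ⧸ M k) = Quotient.mk'' g := hx
  rw [Quotient.eq'', QuotientGroup.leftRel_apply] at hx'
  -- decompose h' as an element of H * Φ
  have hmem : (h' : G) ∈ (↑H * ↑Φ : Set G) := by
    rw [← Subgroup.mul_normal H Φ]
    exact h'.2
  obtain ⟨a, ha, f, hf, haf⟩ := hmem
  refine ⟨a, ha, f * ((h' : G)⁻¹ * g), mul_mem (hΦle k hf) hx', ?_⟩
  have haf' : a * f = (h' : G) := haf
  show a * (f * ((h' : G)⁻¹ * g)) = g
  rw [← mul_assoc, haf', mul_inv_cancel_left]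
end

section
/- Let G be a finite group with the property that for every proper subgroup H ⊄ Φ(G) there is a proper subgroup K with G = HK. Then G possesses a maximal subgroup M with [G : M] = p, where p is the smallest prime divisor of |G/Φ(G)|, and this M is normal in G. -/
open scoped Pointwise

open Subgroup in
private lemma aux_isCoatom_of_index_prime {G : Type*} [Group G] [Finite G] {M : Subgroup G}
    (hM : M.index.Prime) : IsCoatom M := by
  constructor
  · intro htop
    rw [Subgroup.index_eq_one.mpr htop] at hM
    exact hM.one_lt.ne' rfl
  · intro K hMK
    have h1 := Subgroup.relIndex_mul_index hMK.le
    have h2 : K.index ∣ M.index := dvd_of_mul_left_eq _ h1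
    rcases hM.eq_one_or_self_of_dvd _ h2 with h | h
    · exact Subgroup.index_eq_one.mp h
    · exfalso
      rw [h] at h1
      have hpos : 0 < M.index := hM.pos
      have hrel : M.relIndex K = 1 := by
        rcases Nat.lt_or_ge (M.relIndex K) 2 with hr | hr
        · interval_cases (M.relIndex K) <;> omega
        · nlinarith
      exact hMK.ne (le_antisymm hMK.le (Subgroup.relIndex_eq_one.mp hrel))

private lemma aux_relIndex_eq_index_of_mul_eq_univ {G : Type*} [Group G] {H M : Subgroup G}
    (hHM : (H : Set G) * (M : Set G) = Set.univ) : M.relIndex H = M.index := by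
  rw [Subgroup.relIndex, Subgroup.index_eq_card, Subgroup.index_eq_card]
  refine Nat.card_congr (Equiv.ofBijective (Quotient.map' Subtype.val ?_) ⟨?_, ?_⟩)
  · intro a b hab
    rw [QuotientGroup.leftRel_apply] at hab ⊢
    simpa [Subgroup.mem_subgroupOf] using hab
  · refine Quotient.ind₂' ?_
    intro a b hab
    have hab' : (QuotientGroup.mk (a : G) : G ⧸ M) = QuotientGroup.mk (b : G) := hab
    rw [QuotientGroup.eq] at hab'
    apply Quotient.sound'
    rw [QuotientGroup.leftRel_apply]
    simpa [Subgroup.mem_subgroupOf] using hab'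
  · refine Quotient.ind' ?_
    intro g
    have hg : g ∈ (H : Set G) * (M : Set G) := by rw [hHM]; trivial
    obtain ⟨a, ha, b, hb, rfl⟩ := hg
    refine ⟨QuotientGroup.mk (⟨a, ha⟩ : H), ?_⟩
    show (QuotientGroup.mk a : G ⧸ M) = QuotientGroup.mk (a * b)
    rw [QuotientGroup.eq]
    simpa using hb

private lemma aux_normal_of_index_min {G : Type*} [Group G] [Finite G] {M : Subgroup G} {p : ℕ}
    (hp : p.Prime) (hidx : M.index = p)
    (hmin : ∀ q : ℕ, q.Prime → q ∣ Nat.card G → p ≤ q) : M.Normal := by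
  classical
  have hcore : M.normalCore.index ∣ p.factorial := by
    rw [Subgroup.normalCore_eq_ker, Subgroup.index_ker]
    have h1 : Nat.card (MulAction.toPermHom G (G ⧸ M)).range ∣
        Nat.card (Equiv.Perm (G ⧸ M)) := Subgroup.card_subgroup_dvd_card _
    have h2 : Nat.card (Equiv.Perm (G ⧸ M)) = (Nat.card (G ⧸ M)).factorial := by
      cases nonempty_fintype (G ⧸ M)
      rw [Nat.card_eq_fintype_card, Nat.card_eq_fintype_card, Fintype.card_perm]
    rwa [h2, ← Subgroup.index_eq_card, hidx] at h1
  have h1 : M.normalCore.relIndex M * M.index = M.normalCore.index :=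
    Subgroup.relIndex_mul_index (Subgroup.normalCore_le M)
  set r := M.normalCore.relIndex M with hr_def
  have hr1 : r = 1 := by
    by_contra hr
    have hcore0 : M.normalCore.index ≠ 0 := Subgroup.index_ne_zero_of_finite
    have hr0 : r ≠ 0 := by
      intro h0
      rw [h0, zero_mul] at h1
      exact hcore0 h1.symm
    have hq := Nat.minFac_prime hr
    set q := r.minFac
    have hq_card : q ∣ Nat.card G := by
      have : q ∣ M.normalCore.index := by
        refine (r.minFac_dvd).trans ?_
        exact Dvd.intro _ h1
      exact this.trans (Subgroup.index_dvd_card _)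
    have hqp : p ≤ q := hmin q hq hq_card
    have hfac : p * (p - 1).factorial = p.factorial := Nat.mul_factorial_pred hp.ne_zero
    have hrdvd : r ∣ (p - 1).factorial := by
      have h4 : r * p ∣ p.factorial := by
        have h5 : r * M.index = M.normalCore.index := h1
        rw [hidx] at h5
        rw [h5]
        exact hcore
      have h3 : p * r ∣ p * (p - 1).factorial := by
        rw [mul_comm p r, hfac]; exact h4
      exact (mul_dvd_mul_iff_left (a := p) (by exact_mod_cast hp.pos.ne')).mp h3
    have hq2 : q ∣ (p - 1).factorial := (r.minFac_dvd).trans hrdvd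
    have hle : q ≤ p - 1 := (hq.dvd_factorial).mp hq2
    have := hp.two_le
    omega
  have hMle : M ≤ M.normalCore := Subgroup.relIndex_eq_one.mp hr1
  have heq : M.normalCore = M := le_antisymm (Subgroup.normalCore_le M) hMle
  rw [← heq]
  infer_instance

theorem exists_normal_maximal_of_smallest_prime_index
    (G : Type*) [Group G] [Finite G] (p : ℕ) (hp : p.Prime)
    (hpdvd : p ∣ Nat.card (G ⧸ frattini G))
    (hmin : ∀ q : ℕ, q.Prime → q ∣ Nat.card (G ⧸ frattini G) → p ≤ q)
    (h : ∀ H : Subgroup G, H ≠ ⊤ → ¬ H ≤ frattini G →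
      ∃ K : Subgroup G, K ≠ ⊤ ∧ (H : Set G) * (K : Set G) = Set.univ) :
    ∃ M : Subgroup G, IsCoatom M ∧ M.index = p ∧ M.Normal := by
  classical
  have hπ : Function.Surjective (QuotientGroup.mk' (frattini G)) :=
    QuotientGroup.mk'_surjective _
  haveI : Fintype (G ⧸ frattini G) := Fintype.ofFinite (G ⧸ frattini G)
  haveI : Fact p.Prime := ⟨hp⟩
  obtain ⟨x, hx⟩ := exists_prime_orderOf_dvd_card (G := G ⧸ frattini G) p
    (by rw [← Nat.card_eq_fintype_card]; exact hpdvd)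
  set H : Subgroup G := (Subgroup.zpowers x).comap (QuotientGroup.mk' (frattini G)) with hH_def
  have hΦH : frattini G ≤ H := by
    intro g hg
    have hg1 : (QuotientGroup.mk' (frattini G)) g = 1 := by
      rw [← MonoidHom.mem_ker, QuotientGroup.ker_mk']
      exact hg
    show (QuotientGroup.mk' (frattini G)) g ∈ Subgroup.zpowers x
    rw [hg1]
    exact one_mem _
  have hmapH : Subgroup.map (QuotientGroup.mk' (frattini G)) H = Subgroup.zpowers x :=
    Subgroup.map_comap_eq_self_of_surjective hπ _
  have hrelΦH : (frattini G).relIndex H = p := by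
    conv_lhs => rw [← QuotientGroup.ker_mk' (frattini G), ← MonoidHom.comap_bot]
    rw [Subgroup.relIndex_comap, hmapH, Subgroup.relIndex_bot_left, Nat.card_zpowers, hx]
  by_cases hHtop : H = ⊤
  · refine ⟨frattini G, ?_, ?_, inferInstance⟩
    · apply aux_isCoatom_of_index_prime
      rw [← Subgroup.relIndex_top_right, ← hHtop, hrelΦH]
      exact hp
    · rw [← Subgroup.relIndex_top_right, ← hHtop, hrelΦH]
  · have hHΦ : ¬ H ≤ frattini G := by
      intro hle
      have : H = frattini G := le_antisymm hle hΦH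
      rw [this, Subgroup.relIndex_self] at hrelΦH
      exact hp.one_lt.ne' hrelΦH.symm
    obtain ⟨K, hKtop, hHK⟩ := h H hHtop hHΦ
    rcases IsCoatomic.eq_top_or_exists_le_coatom K with hK | ⟨M, hM, hKM⟩
    · exact absurd hK hKtop
    have hHM : (H : Set G) * (M : Set G) = Set.univ := by
      apply subset_antisymm (Set.subset_univ _)
      rw [← hHK]
      exact Set.mul_subset_mul_left (SetLike.coe_subset_coe.mpr hKM)
    have hΦM : frattini G ≤ M := frattini_le_coatom hM
    have hdvd : M.index ∣ p := by
      rw [← aux_relIndex_eq_index_of_mul_eq_univ hHM, ← hrelΦH]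
      exact Subgroup.relIndex_dvd_of_le_left H hΦM
    have hMp : M.index = p := by
      rcases hp.eq_one_or_self_of_dvd _ hdvd with h1 | h1
      · exact absurd (Subgroup.index_eq_one.mp h1) hM.1
      · exact h1
    have hcomap : Subgroup.comap (QuotientGroup.mk' (frattini G))
        (Subgroup.map (QuotientGroup.mk' (frattini G)) M) = M := by
      rw [Subgroup.comap_map_eq, QuotientGroup.ker_mk']
      exact sup_of_le_left hΦM
    have hM'idx : (Subgroup.map (QuotientGroup.mk' (frattini G)) M).index = p := by
      have hic := Subgroup.index_comap_of_surjective
        (H := Subgroup.map (QuotientGroup.mk' (frattini G)) M) hπ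
      rw [hcomap] at hic
      rw [← hic, hMp]
    have hM'normal := aux_normal_of_index_min hp hM'idx hmin
    have hnormal : M.Normal := by
      rw [← hcomap]
      exact hM'normal.comap _
    exact ⟨M, hM, hMp, hnormal⟩
end

section
/- Let G = ⟨x,y : x^{p^m} = y^{q^n} = 1, x^y = x^λ⟩ where p, q are distinct primes, m, n ≥ 1, and λ has multiplicative order q modulo p^m. Then every proper subgroup of G not contained in Φ(G) is either of the form ⟨x^{p^i}⟩ ⋊ ⟨y⟩^{x^j} (for suitable i, j) or of the form ⟨x⟩ ⋊ ⟨y^{q^k}⟩ (for suitable k ≥ 1), and any subgroup of the first form together with any subgroup of the second form have product equal to G. -/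
open scoped Pointwise
open Subgroup

/-- Any subgroup of `ℤ` built from "exponents of `y` appearing in `H` modulo a normal
subgroup `X`". -/
private def auxCoeffs {G : Type*} [Group G] (X H : Subgroup G) (hX : X.Normal) (y : G) :
    AddSubgroup ℤ where
  carrier := {b | ∃ w ∈ X, w * y ^ b ∈ H}
  zero_mem' := ⟨1, X.one_mem, by simpa using H.one_mem⟩
  add_mem' := by
    rintro b d ⟨w1, hw1, h1⟩ ⟨w2, hw2, h2⟩
    refine ⟨w1 * (y ^ b * w2 * (y ^ b)⁻¹), mul_mem hw1 (hX.conj_mem w2 hw2 (y ^ b)), ?_⟩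
    have : w1 * (y ^ b * w2 * (y ^ b)⁻¹) * y ^ (b + d) = (w1 * y ^ b) * (w2 * y ^ d) := by
      rw [zpow_add]; group
    rw [this]; exact mul_mem h1 h2
  neg_mem' := by
    rintro b ⟨w, hw, h⟩
    refine ⟨(y ^ b)⁻¹ * w⁻¹ * ((y ^ b)⁻¹)⁻¹, hX.conj_mem w⁻¹ (inv_mem hw) (y ^ b)⁻¹, ?_⟩
    have : (y ^ b)⁻¹ * w⁻¹ * ((y ^ b)⁻¹)⁻¹ * y ^ (-b) = (w * y ^ b)⁻¹ := by
      rw [zpow_neg]; group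
    rw [this]; exact inv_mem h

/-- If `g` has prime power order `ρ ^ e` and `⟨g^ρ⟩` is normal, then `g ^ ρ` lies in every
maximal subgroup, hence in the Frattini subgroup. -/
private lemma aux_mem_frattini {G : Type*} [Group G] {g : G} {ρ e : ℕ}
    (hord : orderOf g = ρ ^ e)
    (hN : (zpowers (g ^ ρ)).Normal) : g ^ ρ ∈ frattini G := by
  have hmem : ∀ M : Subgroup G, IsCoatom M → g ^ ρ ∈ M := by
    intro M hM
    by_contra hgM
    have hlt : M < M ⊔ zpowers (g ^ ρ) :=
      left_lt_sup.mpr fun hle => hgM (hle (mem_zpowers _))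
    have htop : M ⊔ zpowers (g ^ ρ) = ⊤ := hM.2 _ hlt
    have hg : g ∈ ((M ⊔ zpowers (g ^ ρ) : Subgroup G) : Set G) := by
      rw [htop]; trivial
    rw [Subgroup.mul_normal] at hg
    obtain ⟨a, ha, b, hb, hab⟩ := hg
    obtain ⟨s, rfl⟩ := mem_zpowers_iff.mp hb
    have ha2 : a ∈ M := ha
    have ha' : g ^ ((1 : ℤ) - (ρ : ℤ) * s) = a := by
      have h1 : a = g * ((g ^ ρ) ^ s)⁻¹ := eq_mul_inv_of_mul_eq hab
      rw [h1, ← zpow_natCast g ρ, ← zpow_mul, ← zpow_neg, sub_eq_add_neg, zpow_add, zpow_one]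
    have hcop : IsCoprime ((1 : ℤ) - (ρ : ℤ) * s) (((ρ : ℤ)) ^ e) :=
      IsCoprime.pow_right ⟨1, s, by ring⟩
    obtain ⟨u, v, huv⟩ := hcop
    have hge : g ^ ((ρ : ℤ) ^ e * v) = 1 := by
      rw [zpow_mul, show ((ρ : ℤ) ^ e) = ((ρ ^ e : ℕ) : ℤ) by push_cast; ring,
        zpow_natCast, ← hord, pow_orderOf_eq_one, one_zpow]
    have hgm : g ∈ M := by
      have h2 : g = (g ^ ((1 : ℤ) - (ρ : ℤ) * s)) ^ u * g ^ ((ρ : ℤ) ^ e * v) := by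
        rw [← zpow_mul, ← zpow_add,
          show ((1 : ℤ) - (ρ : ℤ) * s) * u + (ρ : ℤ) ^ e * v = u * (1 - (ρ : ℤ) * s) + v * (ρ : ℤ) ^ e by ring,
          huv, zpow_one]
      rw [h2, hge, mul_one, ha']
      exact zpow_mem ha2 u
    exact hgM (pow_mem hgm ρ)
  unfold frattini Order.radical
  exact Subgroup.mem_iInf.mpr fun M => Subgroup.mem_iInf.mpr fun hM => hmem M hM

theorem metacyclic_factorization_graph_complete_bipartite
    (G : Type*) [Group G] [Finite G] (p q m n lam : ℕ)
    (hp : p.Prime) (hq : q.Prime) (hpq : p ≠ q) (hm : 1 ≤ m) (hn : 1 ≤ n)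
    (x y : G) (hgen : Subgroup.closure {x, y} = ⊤)
    (hcard : Nat.card G = p ^ m * q ^ n)
    (hx : orderOf x = p ^ m) (hy : orderOf y = q ^ n)
    (hconj : y⁻¹ * x * y = x ^ lam)
    (hord : orderOf (lam : ZMod (p ^ m)) = q) :
    (∀ H : Subgroup G, H ≠ ⊤ → ¬ H ≤ frattini G →
      (∃ i j : ℕ, H = zpowers (x ^ p ^ i) ⊔ zpowers ((x ^ j)⁻¹ * y * x ^ j)) ∨
      (∃ k : ℕ, 1 ≤ k ∧ H = zpowers x ⊔ zpowers (y ^ q ^ k))) ∧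
    (∀ i j k : ℕ, 1 ≤ k →
      ((zpowers (x ^ p ^ i) ⊔ zpowers ((x ^ j)⁻¹ * y * x ^ j) : Subgroup G) : Set G) *
        ((zpowers x ⊔ zpowers (y ^ q ^ k) : Subgroup G) : Set G) = Set.univ) := by
  -- basic power identities
  have hxeq : ∀ a b : ℤ, x ^ a = x ^ b ↔ ((p : ℤ) ^ m) ∣ (a - b) := by
    intro a b
    have h := orderOf_dvd_sub_iff_zpow_eq_zpow (x := x) (a := a) (b := b)
    rw [hx] at h; push_cast at h; exact h.symm
  have hxone : ∀ a : ℤ, x ^ a = 1 ↔ ((p : ℤ) ^ m) ∣ a := by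
    intro a; have h := hxeq a 0; simpa using h
  have hyone : ∀ b : ℤ, y ^ b = 1 ↔ ((q : ℤ) ^ n) ∣ b := by
    intro b
    have h := orderOf_dvd_iff_zpow_eq_one (x := y) (i := b)
    rw [hy] at h; push_cast at h; exact h.symm
  -- conjugation formulas
  have hconjz : ∀ a : ℤ, y⁻¹ * x ^ a * y = x ^ ((lam : ℤ) * a) := by
    intro a
    have h2 := conj_zpow (i := a) (a := y⁻¹) (b := x)
    rw [inv_inv, hconj, ← zpow_natCast x lam, ← zpow_mul] at h2
    exact h2.symm
  have hlamq : ((p : ℤ) ^ m) ∣ (lam : ℤ) ^ q - 1 := by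
    have h1 : ((lam : ZMod (p ^ m))) ^ q = 1 := by rw [← hord]; exact pow_orderOf_eq_one _
    have h2 : (((lam : ℤ) ^ q - 1 : ℤ) : ZMod (p ^ m)) = 0 := by push_cast; rw [h1]; ring
    have h3 := (ZMod.intCast_zmod_eq_zero_iff_dvd _ _).mp h2
    push_cast at h3; exact h3
  have hyxy : y * x * y⁻¹ = x ^ ((lam : ℤ) ^ (q - 1)) := by
    have h1 : y⁻¹ * x ^ ((lam : ℤ) ^ (q - 1)) * y = x := by
      rw [hconjz, show (lam : ℤ) * (lam : ℤ) ^ (q - 1) = (lam : ℤ) ^ q by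
        rw [← pow_succ']; congr 1; have := hq.one_lt; omega]
      rw [(hxeq ((lam : ℤ) ^ q) 1).mpr (by simpa using hlamq), zpow_one]
    have h2 : y * (y⁻¹ * x ^ ((lam : ℤ) ^ (q - 1)) * y) * y⁻¹ = x ^ ((lam : ℤ) ^ (q - 1)) := by
      group
    rw [h1] at h2; exact h2
  -- `zpowers x` is normal
  have hXn : (zpowers x).Normal := by
    have hx_norm : x ∈ (normalizer (zpowers x : Set G) : Set G) :=
      le_normalizer (mem_zpowers x)
    have hy_norm : y ∈ (normalizer (zpowers x : Set G) : Set G) := by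
      rw [SetLike.mem_coe, mem_normalizer_iff]
      intro h
      constructor
      · intro hh
        obtain ⟨a, rfl⟩ := mem_zpowers_iff.mp hh
        rw [← conj_zpow, hyxy, ← zpow_mul]
        exact zpow_mem_zpowers _ _
      · intro hh
        obtain ⟨a, ha⟩ := mem_zpowers_iff.mp hh
        have h1 : h = y⁻¹ * x ^ a * y := by
          rw [ha]; group
        rw [h1, hconjz]
        exact zpow_mem_zpowers _ _
    rw [← Subgroup.normalizer_eq_top_iff, eq_top_iff, ← hgen, closure_le]
    rintro g (rfl | rfl)
    · exact hx_norm
    · exact hy_norm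
  haveI := hXn
  -- `y^q` is central
  have hyq : ∀ b : ℕ, (y ^ b)⁻¹ * x * y ^ b = x ^ ((lam : ℤ) ^ b) := by
    intro b
    induction b with
    | zero => simp
    | succ b ih =>
      have h1 : (y ^ (b + 1))⁻¹ * x * y ^ (b + 1) = y⁻¹ * ((y ^ b)⁻¹ * x * y ^ b) * y := by
        rw [pow_succ]; group
      rw [h1, ih, hconjz, ← pow_succ']
  have hcent : ∀ g : G, y ^ q * g = g * y ^ q := by
    have hyqx : (y ^ q)⁻¹ * x * y ^ q = x := by
      rw [hyq q, (hxeq _ 1).mpr (by simpa using hlamq), zpow_one]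
    have hmain : (⊤ : Subgroup G) ≤ centralizer {y ^ q} := by
      have hcx : x ∈ (centralizer {y ^ q} : Set G) := by
        rw [SetLike.mem_coe, mem_centralizer_iff]
        intro w hw
        rw [Set.mem_singleton_iff] at hw
        subst hw
        have h2 : y ^ q * x = x * y ^ q := by
          conv_lhs => rw [← hyqx]
          group
        exact h2
      have hcy : y ∈ (centralizer {y ^ q} : Set G) := by
        rw [SetLike.mem_coe, mem_centralizer_iff]
        intro w hw
        rw [Set.mem_singleton_iff] at hw
        subst hw
        group
      rw [← hgen, closure_le]
      rintro g (rfl | rfl)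
      · exact hcx
      · exact hcy
    intro g
    exact mem_centralizer_iff.mp (hmain (Subgroup.mem_top g)) (y ^ q) (Set.mem_singleton _)
  -- decomposition g = x^a * y^b
  have hdecomp : ∀ g : G, ∃ a b : ℤ, g = x ^ a * y ^ b := by
    have hsupxy : (zpowers x) ⊔ (zpowers y) = ⊤ := by
      have hmx : x ∈ ((zpowers x ⊔ zpowers y : Subgroup G) : Set G) :=
        SetLike.mem_coe.mpr (mem_sup_left (mem_zpowers x))
      have hmy : y ∈ ((zpowers x ⊔ zpowers y : Subgroup G) : Set G) :=
        SetLike.mem_coe.mpr (mem_sup_right (mem_zpowers y))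
      rw [eq_top_iff, ← hgen, closure_le]
      rintro g (rfl | rfl)
      · exact hmx
      · exact hmy
    intro g
    have h1 : g ∈ ((zpowers x ⊔ zpowers y : Subgroup G) : Set G) := by rw [hsupxy]; trivial
    rw [Subgroup.normal_mul] at h1
    obtain ⟨w1, hw1, w2, hw2, hg⟩ := Set.mem_mul.mp h1
    obtain ⟨a, rfl⟩ := mem_zpowers_iff.mp hw1
    obtain ⟨b, rfl⟩ := mem_zpowers_iff.mp hw2
    exact ⟨a, b, hg.symm⟩
  -- normality of ⟨x^p⟩ and ⟨y^q⟩, Frattini membership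
  have hxpn : (zpowers (x ^ p)).Normal := by
    constructor
    intro nn hnn g
    obtain ⟨s, rfl⟩ := mem_zpowers_iff.mp hnn
    obtain ⟨c, hc⟩ := mem_zpowers_iff.mp (hXn.conj_mem x (mem_zpowers x) g)
    have h1 : g * (x ^ p) ^ s * g⁻¹ = (g * x * g⁻¹) ^ ((p : ℤ) * s) := by
      rw [conj_zpow, ← zpow_natCast x p, ← zpow_mul]
    rw [h1, ← hc, ← zpow_mul]
    refine mem_zpowers_iff.mpr ⟨c * s, ?_⟩
    rw [← zpow_natCast x p, ← zpow_mul]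
    congr 1; ring
  have hyqn : (zpowers (y ^ q)).Normal := by
    constructor
    intro nn hnn g
    obtain ⟨s, rfl⟩ := mem_zpowers_iff.mp hnn
    have h2 : Commute (y ^ q) g := hcent g
    have h3 : g * (y ^ q) ^ s = (y ^ q) ^ s * g := (h2.zpow_left s).symm.eq
    have h4 : g * (y ^ q) ^ s * g⁻¹ = (y ^ q) ^ s := by rw [h3]; group
    rw [h4]; exact zpow_mem_zpowers _ _
  have hfrx : x ^ p ∈ frattini G := aux_mem_frattini hx hxpn
  have hfry : y ^ q ∈ frattini G := aux_mem_frattini hy hyqn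
  -- arithmetic: λ ≢ 1 mod p
  have hppow : ((p : ℤ) ∣ (lam : ℤ) - 1) →
      ∀ s : ℕ, ((p : ℤ) ^ (s + 1)) ∣ (lam : ℤ) ^ (p ^ s) - 1 := by
    intro hdvd s
    induction s with
    | zero => simpa using hdvd
    | succ s ih =>
      set a : ℤ := (lam : ℤ) ^ (p ^ s) with ha
      have h1 : (p : ℤ) ∣ ∑ i ∈ Finset.range p, a ^ i := by
        have h2 : ∀ i ∈ Finset.range p, (p : ℤ) ∣ (a ^ i - 1) := by
          intro i _
          have h5 : (a - 1) ∣ (a ^ i - 1) := by simpa using sub_dvd_pow_sub_pow a 1 i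
          exact dvd_trans (dvd_trans (dvd_pow_self (p : ℤ) (Nat.succ_ne_zero s)) ih) h5
        have h3 : (p : ℤ) ∣ ∑ i ∈ Finset.range p, (a ^ i - 1) := Finset.dvd_sum h2
        have h4 : ∑ i ∈ Finset.range p, (a ^ i - 1) = (∑ i ∈ Finset.range p, a ^ i) - p := by
          rw [Finset.sum_sub_distrib, Finset.sum_const, Finset.card_range]; push_cast; ring
        rw [h4] at h3
        simpa using dvd_add h3 (dvd_refl (p : ℤ))
      have h5 : ((p : ℤ) ^ (s + 2)) ∣ (∑ i ∈ Finset.range p, a ^ i) * (a - 1) := by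
        rw [show ((p : ℤ)) ^ (s + 2) = (p : ℤ) * (p : ℤ) ^ (s + 1) by ring]
        exact mul_dvd_mul h1 ih
      have h6 : (∑ i ∈ Finset.range p, a ^ i) * (a - 1) = (lam : ℤ) ^ (p ^ (s + 1)) - 1 := by
        rw [geom_sum_mul, ha, ← pow_mul, ← pow_succ]
      rw [← h6]; exact h5
  have hlam_unit : ¬ ((p : ℤ) ∣ (lam : ℤ) - 1) := by
    intro hdvd
    have h1 := hppow hdvd (m - 1)
    rw [show (m - 1) + 1 = m by omega] at h1
    have h2 : ((lam : ZMod (p ^ m))) ^ (p ^ (m - 1)) = 1 := by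
      have h3 : (((lam : ℤ) ^ (p ^ (m - 1)) - 1 : ℤ) : ZMod (p ^ m)) = 0 := by
        rw [ZMod.intCast_zmod_eq_zero_iff_dvd]; push_cast; exact h1
      push_cast at h3
      exact sub_eq_zero.mp h3
    have h5 : q ∣ p ^ (m - 1) := by rw [← hord]; exact orderOf_dvd_of_pow_eq_one h2
    have h6 : q ∣ p := hq.dvd_of_dvd_pow h5
    exact hpq ((Nat.prime_dvd_prime_iff_eq hq hp).mp h6).symm
  have hlam'_unit : ¬ ((p : ℤ) ∣ (lam : ℤ) ^ (q - 1) - 1) := by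
    intro hdvd
    apply hlam_unit
    have h1 : (p : ℤ) ∣ (lam : ℤ) ^ q - 1 :=
      dvd_trans (dvd_pow_self (p : ℤ) (by omega : m ≠ 0)) hlamq
    have hql : (lam : ℤ) * (lam : ℤ) ^ (q - 1) = (lam : ℤ) ^ q := by
      rw [← pow_succ']; congr 1; have := hq.one_lt; omega
    have h2 : (lam : ℤ) - 1 = ((lam : ℤ) ^ q - 1) - (lam : ℤ) * ((lam : ℤ) ^ (q - 1) - 1) := by
      rw [mul_sub, hql]; ring
    rw [h2]
    exact dvd_sub h1 (Dvd.dvd.mul_left hdvd _)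
  have hcop : IsCoprime ((lam : ℤ) ^ (q - 1) - 1) ((p : ℤ) ^ m) := by
    have hpint : Prime (p : ℤ) := Nat.prime_iff_prime_int.mp hp
    exact ((hpint.coprime_iff_not_dvd.mpr hlam'_unit).symm).pow_right
  constructor
  · -- classification of subgroups not below the Frattini subgroup
    intro H hHtop hHfr
    -- the subgroup of x-exponents in H
    have hbotn : (⊥ : Subgroup G).Normal := ⟨fun nn hnn g => by
      rw [Subgroup.mem_bot.mp hnn]; simp⟩
    obtain ⟨tA, htA⟩ := Int.subgroup_cyclic (auxCoeffs ⊥ H hbotn x)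
    have hAmem' : ∀ a : ℤ, x ^ a ∈ H ↔ tA ∣ a := by
      intro a
      have hiff : a ∈ auxCoeffs ⊥ H hbotn x ↔ x ^ a ∈ H := by
        constructor
        · rintro ⟨w, hw, h⟩
          rw [Subgroup.mem_bot.mp hw, one_mul] at h; exact h
        · intro h; exact ⟨1, Subgroup.mem_bot.mpr rfl, by rwa [one_mul]⟩
      rw [← hiff, htA, AddSubgroup.mem_closure_singleton]
      constructor
      · rintro ⟨e, he⟩; exact ⟨e, by rw [← he, smul_eq_mul]; ring⟩
      · rintro ⟨e, rfl⟩; exact ⟨e, by rw [smul_eq_mul]; ring⟩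
    have hpmA : tA ∣ ((p : ℤ) ^ m) :=
      (hAmem' _).mp (by rw [(hxone ((p : ℤ) ^ m)).mpr dvd_rfl]; exact H.one_mem)
    have htAdvd : tA.natAbs ∣ p ^ m := by
      have h := Int.natAbs_dvd_natAbs.mpr hpmA
      simpa [Int.natAbs_pow] using h
    obtain ⟨i, hile, hti⟩ := (Nat.dvd_prime_pow hp).mp htAdvd
    have hAmem'' : ∀ a : ℤ, x ^ a ∈ H ↔ ((p : ℤ) ^ i) ∣ a := by
      intro a
      rw [hAmem' a, ← Int.natAbs_dvd, hti]
      push_cast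
      rfl
    -- the subgroup of y-exponents in H
    obtain ⟨tB, htB⟩ := Int.subgroup_cyclic (auxCoeffs (zpowers x) H hXn y)
    have hBmem : ∀ b : ℤ, (∃ w ∈ zpowers x, w * y ^ b ∈ H) ↔ tB ∣ b := by
      intro b
      have hiff : b ∈ auxCoeffs (zpowers x) H hXn y ↔ (∃ w ∈ zpowers x, w * y ^ b ∈ H) :=
        Iff.rfl
      rw [← hiff, htB, AddSubgroup.mem_closure_singleton]
      constructor
      · rintro ⟨e, he⟩; exact ⟨e, by rw [← he, smul_eq_mul]; ring⟩
      · rintro ⟨e, rfl⟩; exact ⟨e, by rw [smul_eq_mul]; ring⟩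
    have hqnB : tB ∣ ((q : ℤ) ^ n) := by
      rw [← hBmem]
      exact ⟨1, one_mem _, by rw [one_mul, (hyone _).mpr dvd_rfl]; exact H.one_mem⟩
    have htBdvd : tB.natAbs ∣ q ^ n := by
      have h := Int.natAbs_dvd_natAbs.mpr hqnB
      simpa [Int.natAbs_pow] using h
    obtain ⟨k, hkle, htk⟩ := (Nat.dvd_prime_pow hq).mp htBdvd
    have hBmem' : ∀ b : ℤ, (∃ w ∈ zpowers x, w * y ^ b ∈ H) ↔ ((q : ℤ) ^ k) ∣ b := by
      intro b
      rw [hBmem b, ← Int.natAbs_dvd, htk]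
      push_cast
      rfl
    obtain ⟨w0, hw0X, hw0H⟩ := (hBmem' ((q : ℤ) ^ k)).mpr dvd_rfl
    obtain ⟨a0, rfl⟩ := mem_zpowers_iff.mp hw0X
    set c : ℤ := (q : ℤ) ^ k with hc_def
    set g0 : G := x ^ a0 * y ^ c with hg0_def
    have hg0H : g0 ∈ H := hw0H
    have hg0pow : ∀ s : ℤ, ∃ w ∈ zpowers x, g0 ^ s = w * y ^ (c * s) := by
      intro s
      induction s using Int.induction_on with
      | zero => exact ⟨1, one_mem _, by simp⟩
      | succ i ih =>
        obtain ⟨w, hw, hws⟩ := ih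
        refine ⟨w * (y ^ (c * (i : ℤ)) * x ^ a0 * (y ^ (c * (i : ℤ)))⁻¹),
          mul_mem hw (hXn.conj_mem _ (zpow_mem_zpowers x a0) _), ?_⟩
        rw [zpow_add_one, hws, hg0_def,
          show c * ((i : ℤ) + 1) = c * (i : ℤ) + c by ring, zpow_add]
        group
      | pred i ih =>
        obtain ⟨w, hw, hws⟩ := ih
        refine ⟨w * (y ^ (c * (-(i : ℤ) - 1)) * (x ^ a0)⁻¹ * (y ^ (c * (-(i : ℤ) - 1)))⁻¹),
          mul_mem hw (hXn.conj_mem _ (inv_mem (zpow_mem_zpowers x a0)) _), ?_⟩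
        rw [zpow_sub_one, hws, hg0_def,
          show c * (-(i : ℤ)) = c * (-(i : ℤ) - 1) + c by ring, zpow_add]
        group
    have hxpiH : x ^ (p ^ i) ∈ H := by
      have h7 : x ^ (p ^ i : ℕ) = x ^ ((p : ℤ) ^ i) := by
        rw [← zpow_natCast]; norm_cast
      rw [h7]; exact (hAmem'' _).mpr dvd_rfl
    have hHrep : H = zpowers (x ^ p ^ i) ⊔ zpowers g0 := by
      apply le_antisymm
      · intro h hh
        obtain ⟨a, b, rfl⟩ := hdecomp h
        have hbB : c ∣ b := (hBmem' b).mp ⟨x ^ a, zpow_mem_zpowers x a, hh⟩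
        obtain ⟨s, rfl⟩ := hbB
        obtain ⟨w, hwX, hws⟩ := hg0pow s
        obtain ⟨a', ha'⟩ :=
          mem_zpowers_iff.mp (mul_mem (zpow_mem_zpowers x a) (inv_mem hwX))
        have hxa'H : x ^ a' ∈ H := by
          rw [ha']
          have h8 : x ^ a * w⁻¹ = (x ^ a * y ^ (c * s)) * (g0 ^ s)⁻¹ := by
            rw [hws]; group
          rw [h8]
          exact mul_mem hh (inv_mem (zpow_mem hg0H s))
        obtain ⟨e, he⟩ := (hAmem'' a').mp hxa'H
        have h9 : (x ^ (p ^ i)) ^ e = x ^ a' := by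
          rw [← zpow_natCast x (p ^ i), ← zpow_mul, he]
          congr 1
        have hfin : x ^ a * y ^ (c * s) = (x ^ (p ^ i)) ^ e * g0 ^ s := by
          rw [hws, h9, ha']; group
        rw [hfin]
        exact mul_mem (mem_sup_left (zpow_mem_zpowers _ e)) (mem_sup_right (zpow_mem_zpowers _ s))
      · exact sup_le (zpowers_le.mpr hxpiH) (zpowers_le.mpr hg0H)
    rcases Nat.eq_zero_or_pos k with hk0 | hk1
    · -- k = 0 : conjugate-of-y type subgroup
      left
      have hc1 : c = 1 := by rw [hc_def, hk0, pow_zero]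
      obtain ⟨u, v, huv⟩ := hcop
      have hpm0 : (0 : ℤ) < (p : ℤ) ^ m :=
        pow_pos (by exact_mod_cast hp.pos) m
      set jZ : ℤ := (a0 * u) % ((p : ℤ) ^ m) with hjZ
      have hjnn : 0 ≤ jZ := Int.emod_nonneg _ (ne_of_gt hpm0)
      set j : ℕ := jZ.toNat with hj
      have hjcast : (j : ℤ) = jZ := Int.toNat_of_nonneg hjnn
      refine ⟨i, j, ?_⟩
      have hconjj : (x ^ j)⁻¹ * y * x ^ j = g0 := by
        have h1 : y * x ^ (j : ℤ) * y⁻¹ = x ^ ((lam : ℤ) ^ (q - 1) * (j : ℤ)) := by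
          rw [← conj_zpow, hyxy, ← zpow_mul]
        have h2 : (x ^ j)⁻¹ * y * x ^ j = x ^ (-(j : ℤ)) * (y * x ^ (j : ℤ) * y⁻¹) * y := by
          rw [← zpow_natCast x j]; group
        have h3 : x ^ (-(j : ℤ)) * x ^ ((lam : ℤ) ^ (q - 1) * (j : ℤ)) = x ^ a0 := by
          rw [← zpow_add]
          apply (hxeq _ _).mpr
          have hd1 : ((p : ℤ) ^ m) ∣ ((lam : ℤ) ^ (q - 1) - 1) * ((j : ℤ) - a0 * u) := by
            apply Dvd.dvd.mul_left
            rw [hjcast, hjZ]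
            exact ⟨-((a0 * u) / ((p : ℤ) ^ m)), by rw [Int.emod_def]; ring⟩
          have hd2 : ((p : ℤ) ^ m) ∣ (a0 * (-(v * (p : ℤ) ^ m))) := ⟨a0 * (-v), by ring⟩
          have key : (-(j : ℤ) + (lam : ℤ) ^ (q - 1) * (j : ℤ)) - a0
              = ((lam : ℤ) ^ (q - 1) - 1) * ((j : ℤ) - a0 * u)
                + (a0 * (-(v * (p : ℤ) ^ m))) := by
            linear_combination (a0 : ℤ) * huv
          rw [key]
          exact dvd_add hd1 hd2
        rw [h2, h1, h3, hg0_def, hc1, zpow_one]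
      rw [hHrep, hconjj]
    · -- k ≥ 1
      have hg0s : ∀ s : ℤ, g0 ^ s = x ^ (a0 * s) * y ^ (c * s) := by
        intro s
        have hcY : Commute (x ^ a0) (y ^ c) := by
          have h1 : y ^ c = (y ^ q) ^ ((q : ℤ) ^ (k - 1)) := by
            rw [← zpow_natCast y q, ← zpow_mul]
            congr 1
            rw [hc_def, show (q : ℤ) * (q : ℤ) ^ (k - 1) = (q : ℤ) ^ k by
              rw [← pow_succ']; congr 1; omega]
          rw [h1]
          exact ((Commute.symm (hcent (x ^ a0))).zpow_right _)
        rw [hg0_def, hcY.mul_zpow, ← zpow_mul, ← zpow_mul]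
      have hg0q : g0 ^ ((q : ℤ) ^ (n - k)) = x ^ (a0 * (q : ℤ) ^ (n - k)) := by
        have h1 : y ^ (c * (q : ℤ) ^ (n - k)) = 1 := by
          rw [show c * (q : ℤ) ^ (n - k) = (q : ℤ) ^ n by
            rw [hc_def, ← pow_add]; congr 1; omega]
          exact (hyone _).mpr dvd_rfl
        rw [hg0s, h1, mul_one]
      have hdvd_i : ((p : ℤ) ^ i) ∣ a0 * (q : ℤ) ^ (n - k) := by
        apply (hAmem'' _).mp
        rw [← hg0q]
        exact zpow_mem hg0H _
      rcases Nat.eq_zero_or_pos i with hi0 | hi1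
      · -- i = 0 : ⟨x⟩⟨y^{q^k}⟩ type subgroup
        right
        have hxa0H : x ^ a0 ∈ H :=
          (hAmem'' a0).mpr (by rw [hi0, pow_zero]; exact one_dvd _)
        have hycH : y ^ c ∈ H := by
          have h1 : y ^ c = (x ^ a0)⁻¹ * g0 := by rw [hg0_def]; group
          rw [h1]
          exact mul_mem (inv_mem hxa0H) hg0H
        have hccast : ((q ^ k : ℕ) : ℤ) = c := by rw [hc_def]; push_cast; ring
        have hyqkH : y ^ (q ^ k) ∈ H := by
          rw [← zpow_natCast y (q ^ k), hccast]
          exact hycH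
        refine ⟨k, hk1, ?_⟩
        apply le_antisymm
        · rw [hHrep]
          apply sup_le
          · rw [zpowers_le, hi0, pow_zero, pow_one]
            exact mem_sup_left (mem_zpowers x)
          · rw [zpowers_le, hg0_def]
            refine mul_mem (mem_sup_left (zpow_mem_zpowers x a0)) (mem_sup_right ?_)
            rw [← hccast, zpow_natCast]
            exact mem_zpowers _
        · have hxH : x ∈ H := by
            have h := (hAmem'' 1).mpr (by rw [hi0, pow_zero])
            simpa using h
          exact sup_le (zpowers_le.mpr hxH) (zpowers_le.mpr hyqkH)
      · -- i ≥ 1 : H would be inside the Frattini subgroup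
        exfalso
        apply hHfr
        rw [hHrep]
        apply sup_le
        · rw [zpowers_le]
          have h1 : x ^ (p ^ i) = (x ^ p) ^ (p ^ (i - 1)) := by
            rw [← pow_mul]
            congr 1
            rw [← pow_succ']
            congr 1
            omega
          rw [h1]
          exact pow_mem hfrx _
        · rw [zpowers_le, hg0_def]
          apply mul_mem
          · have hpa : (p : ℤ) ∣ a0 := by
              have h1 : (p : ℤ) ∣ a0 * (q : ℤ) ^ (n - k) :=
                dvd_trans (dvd_pow_self (p : ℤ) (by omega : i ≠ 0)) hdvd_i
              have hpint : Prime (p : ℤ) := Nat.prime_iff_prime_int.mp hp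
              rcases hpint.dvd_mul.mp h1 with h | h
              · exact h
              · exfalso
                have h2 := hpint.dvd_of_dvd_pow h
                have h3 : p ∣ q := by exact_mod_cast h2
                exact hpq ((Nat.prime_dvd_prime_iff_eq hp hq).mp h3)
            obtain ⟨e, he⟩ := hpa
            have h4 : x ^ a0 = (x ^ p) ^ e := by
              rw [he, ← zpow_natCast x p, ← zpow_mul]
            rw [h4]
            exact zpow_mem hfrx e
          · have h1 : y ^ c = (y ^ q) ^ ((q : ℤ) ^ (k - 1)) := by
              rw [← zpow_natCast y q, ← zpow_mul]
              congr 1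
              rw [hc_def, show (q : ℤ) * (q : ℤ) ^ (k - 1) = (q : ℤ) ^ k by
                rw [← pow_succ']; congr 1; omega]
            rw [h1]
            exact zpow_mem hfry _
  · -- the factorization property
    intro i j k hk
    ext g
    simp only [Set.mem_univ, iff_true]
    obtain ⟨a, b, rfl⟩ := hdecomp g
    refine Set.mem_mul.mpr ⟨((x ^ j)⁻¹ * y * x ^ j) ^ b, ?_,
      (((x ^ j)⁻¹ * y * x ^ j) ^ b)⁻¹ * (x ^ a * y ^ b), ?_, by group⟩
    · exact SetLike.mem_coe.mpr (mem_sup_right (zpow_mem_zpowers _ b))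
    · refine SetLike.mem_coe.mpr (mem_sup_left ?_)
      have h1 : (((x ^ j)⁻¹ * y * x ^ j) ^ b)⁻¹ * (x ^ a * y ^ b)
          = x ^ (-(j : ℤ)) * (y ^ (-b) * x ^ ((j : ℤ) + a) * (y ^ (-b))⁻¹) := by
        rw [show (x ^ j)⁻¹ * y * x ^ j = (x ^ j)⁻¹ * y * ((x ^ j)⁻¹)⁻¹ by rw [inv_inv],
          conj_zpow, inv_inv, ← zpow_natCast x j, zpow_add, zpow_neg, zpow_neg]
        group
      rw [h1]
      exact mul_mem (zpow_mem_zpowers x _)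
        (hXn.conj_mem _ (zpow_mem_zpowers x _) _)
end

section
/- Let G be a finite cyclic group whose order has at least four distinct prime divisors. Then the factorization graph of G contains an induced K_{1,4}: there exist proper subgroups A, B₁, B₂, B₃, B₄ (none contained in Φ(G)) with G = A·Bᵢ for each i and Bᵢ·Bⱼ ≠ G for all i ≠ j. -/
open scoped Pointwise

/-- In a cyclic group, the set of `m`-th roots of unity is a subgroup. -/
def powKer (G : Type*) [Group G] [IsCyclic G] (m : ℕ) : Subgroup G where
  carrier := {x | x ^ m = 1}
  one_mem' := one_pow m
  mul_mem' := by
    intro a b ha hb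
    simp only [Set.mem_setOf_eq] at *
    obtain ⟨g, hg⟩ := IsCyclic.exists_generator (α := G)
    obtain ⟨i, hi⟩ := hg a
    obtain ⟨j, hj⟩ := hg b
    have hc : Commute a b := by
      rw [← hi, ← hj]; exact (Commute.refl g).zpow_zpow i j
    rw [hc.mul_pow, ha, hb, one_mul]
  inv_mem' := by
    intro a ha
    simp only [Set.mem_setOf_eq] at *
    rw [inv_pow, ha, inv_one]

lemma mem_powKer {G : Type*} [Group G] [IsCyclic G] {m : ℕ} {x : G} :
    x ∈ powKer G m ↔ x ^ m = 1 := Iff.rfl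

lemma powKer_normal (G : Type*) [Group G] [IsCyclic G] (m : ℕ) :
    (powKer G m).Normal := by
  constructor
  intro x hx g
  have h1 : g * x * g⁻¹ = (MulAut.conj g) x := rfl
  rw [mem_powKer] at hx ⊢
  rw [h1, ← map_pow, hx, map_one]

lemma powKer_le (G : Type*) [Group G] [IsCyclic G] {m m' : ℕ} (h : m ∣ m') :
    powKer G m ≤ powKer G m' := by
  intro x hx
  obtain ⟨c, rfl⟩ := h
  rw [mem_powKer] at hx ⊢
  rw [pow_mul, hx, one_pow]

set_option maxHeartbeats 1000000 in
theorem k14_of_cyclic_with_four_prime_divisors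
    (G : Type*) [Group G] [Finite G] [IsCyclic G]
    (hprimes : 4 ≤ (Nat.card G).primeFactors.card) :
    ∃ (A : Subgroup G) (B : Fin 4 → Subgroup G),
      (A ≠ ⊤ ∧ ¬ A ≤ frattini G) ∧
      (∀ i, B i ≠ ⊤ ∧ ¬ B i ≤ frattini G) ∧
      (∀ i, (A : Set G) * (B i : Set G) = Set.univ) ∧
      (∀ i j, i ≠ j → B i ≠ B j ∧ (B i : Set G) * (B j : Set G) ≠ Set.univ) := by
  classical
  set n := Nat.card G with hn_def
  have hn : n ≠ 0 := Nat.card_pos.ne'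
  -- extract four distinct primes
  obtain ⟨q0, hq0⟩ : ∃ q, q ∈ n.primeFactors := Finset.card_pos.mp (by omega)
  obtain ⟨q1, hq1'⟩ : ∃ q, q ∈ (n.primeFactors).erase q0 := Finset.card_pos.mp (by
    rw [Finset.card_erase_of_mem hq0]; omega)
  obtain ⟨q2, hq2'⟩ : ∃ q, q ∈ ((n.primeFactors).erase q0).erase q1 := Finset.card_pos.mp (by
    rw [Finset.card_erase_of_mem hq1', Finset.card_erase_of_mem hq0]; omega)
  obtain ⟨q3, hq3'⟩ : ∃ q, q ∈ (((n.primeFactors).erase q0).erase q1).erase q2 :=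
    Finset.card_pos.mp (by
      rw [Finset.card_erase_of_mem hq2', Finset.card_erase_of_mem hq1',
        Finset.card_erase_of_mem hq0]; omega)
  have hq1 : q1 ∈ n.primeFactors := Finset.mem_of_mem_erase hq1'
  have hq2 : q2 ∈ n.primeFactors := Finset.mem_of_mem_erase (Finset.mem_of_mem_erase hq2')
  have hq3 : q3 ∈ n.primeFactors :=
    Finset.mem_of_mem_erase (Finset.mem_of_mem_erase (Finset.mem_of_mem_erase hq3'))
  have h10 : q1 ≠ q0 := (Finset.mem_erase.mp hq1').1
  have h21 : q2 ≠ q1 := (Finset.mem_erase.mp hq2').1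
  have h20 : q2 ≠ q0 := (Finset.mem_erase.mp (Finset.mem_of_mem_erase hq2')).1
  have h32 : q3 ≠ q2 := (Finset.mem_erase.mp hq3').1
  have h31 : q3 ≠ q1 := (Finset.mem_erase.mp (Finset.mem_of_mem_erase hq3')).1
  have h30 : q3 ≠ q0 :=
    (Finset.mem_erase.mp (Finset.mem_of_mem_erase (Finset.mem_of_mem_erase hq3'))).1
  -- package
  set q : Fin 4 → ℕ := ![q0, q1, q2, q3] with hq_def
  have hqmem : ∀ k, q k ∈ n.primeFactors := by
    intro k
    fin_cases k <;> first | exact hq0 | exact hq1 | exact hq2 | exact hq3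
  have hqprime : ∀ k, (q k).Prime := fun k => Nat.prime_of_mem_primeFactors (hqmem k)
  have hqne : ∀ k l : Fin 4, k ≠ l → q k ≠ q l := by
    intro k l hkl
    simp only [hq_def]
    fin_cases k <;> fin_cases l <;>
      first
      | exact absurd rfl hkl
      | exact h10
      | exact h21
      | exact h20
      | exact h32
      | exact h31
      | exact h30
      | exact Ne.symm h10
      | exact Ne.symm h21
      | exact Ne.symm h20
      | exact Ne.symm h32
      | exact Ne.symm h31
      | exact Ne.symm h30
  set P : Fin 4 → ℕ := fun k => q k ^ n.factorization (q k) with hP_def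
  have hPdvd : ∀ k, P k ∣ n := fun k => Nat.ordProj_dvd n (q k)
  have hqP : ∀ k, q k ∣ P k := by
    intro k
    exact dvd_pow_self (q k) (Nat.Prime.factorization_pos_of_dvd (hqprime k) hn
      (Nat.dvd_of_mem_primeFactors (hqmem k))).ne'
  have hndvdP : ∀ k l : Fin 4, k ≠ l → ¬ q k ∣ P l := by
    intro k l hkl h
    have hcop : Nat.Coprime (q k) (q l) :=
      (Nat.coprime_primes (hqprime k) (hqprime l)).mpr (hqne k l hkl)
    exact (Nat.Prime.coprime_iff_not_dvd (hqprime k)).mp (Nat.Coprime.pow_right _ hcop) h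
  set d : ℕ := n / P 3 with hd_def
  have hdP : d * P 3 = n := Nat.div_mul_cancel (hPdvd 3)
  have hcop : Nat.Coprime d (P 3) := by
    have := Nat.coprime_ordCompl (hqprime 3) hn
    exact (Nat.Coprime.pow_left _ this).symm
  -- the subgroups
  set m : Fin 4 → ℕ := ![P 3, P 0 * P 3, P 1 * P 3, P 2 * P 3] with hm_def
  set A : Subgroup G := powKer G d with hA_def
  set B : Fin 4 → Subgroup G := fun i => powKer G (m i) with hB_def
  haveI hBnorm : ∀ i, (B i).Normal := by
    intro i; simp only [hB_def]; exact powKer_normal G (m i)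
  haveI hBnorm0 := hBnorm 0
  have hP3m : ∀ i, P 3 ∣ m i := by
    intro i; fin_cases i <;> simp [hm_def]
  -- generator
  obtain ⟨g, hg⟩ := IsCyclic.exists_ofOrder_eq_natCard (α := G)
  -- A ⊔ B 0 = ⊤
  have hsup0 : A ⊔ B 0 = ⊤ := by
    rw [eq_top_iff]
    intro x _
    have hic : IsCoprime (d : ℤ) ((P 3 : ℕ) : ℤ) := by
      rw [Int.isCoprime_iff_gcd_eq_one, Int.gcd_natCast_natCast]
      exact hcop
    obtain ⟨u, v, huv⟩ := hic
    have hx : x = (x ^ (d : ℤ)) ^ u * (x ^ ((P 3 : ℕ) : ℤ)) ^ v := by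
      rw [← zpow_mul, ← zpow_mul, ← zpow_add, mul_comm (d : ℤ) u,
        mul_comm ((P 3 : ℕ) : ℤ) v, huv, zpow_one]
    rw [hx]
    have hxd : x ^ (d : ℤ) ∈ B 0 := by
      simp only [hB_def]
      rw [zpow_natCast, mem_powKer]
      have hm0 : m 0 = P 3 := by simp [hm_def]
      rw [hm0, ← pow_mul, hdP, hn_def, pow_card_eq_one']
    have hxP : x ^ ((P 3 : ℕ) : ℤ) ∈ A := by
      simp only [hA_def]
      rw [zpow_natCast, mem_powKer, ← pow_mul, mul_comm, hdP, hn_def, pow_card_eq_one']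
    exact mul_mem (Subgroup.mem_sup_right (Subgroup.zpow_mem (B 0) hxd u))
      (Subgroup.mem_sup_left (Subgroup.zpow_mem A hxP v))
  have hBle : ∀ i, B 0 ≤ B i := by
    intro i; simp only [hB_def]
    have hm0 : m 0 = P 3 := by simp [hm_def]
    rw [hm0]
    exact powKer_le G (hP3m i)
  have hsup : ∀ i, A ⊔ B i = ⊤ := by
    intro i
    rw [eq_top_iff, ← hsup0]
    exact sup_le_sup_left (hBle i) A
  -- g not in powKer M when n ∤ M
  have hgnotmem : ∀ M : ℕ, ¬ n ∣ M → g ∉ powKer G M := by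
    intro M hM hmem
    rw [mem_powKer] at hmem
    have h2 := orderOf_dvd_of_pow_eq_one hmem
    rw [hg] at h2
    exact hM h2
  -- ¬ q k ∣ m i facts
  have hnd2 : ∀ k a b : Fin 4, k ≠ a → k ≠ b → ¬ q k ∣ P a * P b := by
    intro k a b ha hb h
    rcases (Nat.Prime.dvd_mul (hqprime k)).mp h with h | h
    exacts [hndvdP k a ha h, hndvdP k b hb h]
  have hqm : ∀ k i : Fin 4, k ≠ 3 → (i ≠ 1 ∨ k ≠ 0) → (i ≠ 2 ∨ k ≠ 1) → (i ≠ 3 ∨ k ≠ 2) →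
      ¬ q k ∣ m i := by
    intro k i hk3 h1 h2 h3
    fin_cases i
    · show ¬ q k ∣ P 3
      exact hndvdP k 3 hk3
    · show ¬ q k ∣ P 0 * P 3
      exact hnd2 k 0 3 (by simpa using h1) hk3
    · show ¬ q k ∣ P 1 * P 3
      exact hnd2 k 1 3 (by simpa using h2) hk3
    · show ¬ q k ∣ P 2 * P 3
      exact hnd2 k 2 3 (by simpa using h3) hk3
  -- n does not divide m i
  have hndvd_mi : ∀ i, ¬ n ∣ m i := by
    intro i hdvd
    have : ∃ k : Fin 4, ¬ q k ∣ m i := by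
      fin_cases i
      · exact ⟨0, hqm 0 0 (by decide) (by decide) (by decide) (by decide)⟩
      · exact ⟨1, hqm 1 1 (by decide) (by decide) (by decide) (by decide)⟩
      · exact ⟨0, hqm 0 2 (by decide) (by decide) (by decide) (by decide)⟩
      · exact ⟨0, hqm 0 3 (by decide) (by decide) (by decide) (by decide)⟩
    obtain ⟨k, hk⟩ := this
    exact hk (dvd_trans (Nat.dvd_of_mem_primeFactors (hqmem k)) hdvd)
  have hBne : ∀ i, B i ≠ ⊤ := by
    intro i htop
    have hmem : g ∈ powKer G (m i) := by
      have : g ∈ B i := htop ▸ Subgroup.mem_top g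
      simpa only [hB_def] using this
    exact hgnotmem (m i) (hndvd_mi i) hmem
  have hP3gt : 1 < P 3 :=
    Nat.one_lt_pow (Nat.Prime.factorization_pos_of_dvd (hqprime 3) hn
      (Nat.dvd_of_mem_primeFactors (hqmem 3))).ne' (hqprime 3).one_lt
  have hAne : A ≠ ⊤ := by
    intro htop
    have hmem : g ∈ powKer G d := by
      have : g ∈ A := htop ▸ Subgroup.mem_top g
      simpa only [hA_def] using this
    have hdpos : 0 < d := by
      rcases Nat.eq_zero_or_pos d with h | h
      · rw [h, zero_mul] at hdP; exact absurd hdP.symm hn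
      · exact h
    have hdlt : d < n := by
      calc d < d * P 3 := by nlinarith
        _ = n := hdP
    refine hgnotmem d (fun h => ?_) hmem
    exact absurd (Nat.le_of_dvd hdpos h) (by omega)
  -- B i ⊔ B j ≠ ⊤ for i ≠ j
  have hsupBB : ∀ i j : Fin 4, i ≠ j → B i ⊔ B j ≠ ⊤ := by
    have key : ∀ i j : Fin 4, (∃ k : Fin 4, ¬ q k ∣ m i ∧ ¬ q k ∣ m j) → B i ⊔ B j ≠ ⊤ := by
      intro i j ⟨k, hki, hkj⟩ htop
      have hle : B i ⊔ B j ≤ powKer G (m i * m j) := by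
        refine sup_le ?_ ?_ <;> simp only [hB_def]
        · exact powKer_le G (dvd_mul_right _ _)
        · exact powKer_le G (dvd_mul_left _ _)
      have hmem : g ∈ powKer G (m i * m j) := hle (htop ▸ Subgroup.mem_top g)
      refine hgnotmem (m i * m j) (fun h => ?_) hmem
      have : q k ∣ m i * m j := dvd_trans (Nat.dvd_of_mem_primeFactors (hqmem k)) h
      rcases (Nat.Prime.dvd_mul (hqprime k)).mp this with h' | h'
      exacts [hki h', hkj h']
    intro i j hij
    fin_cases i <;> fin_cases j <;>
      first
      | exact absurd rfl hij
      | exact key _ _ ⟨1, hqm 1 _ (by decide) (by decide) (by decide) (by decide), hqm 1 _ (by decide) (by decide) (by decide) (by decide)⟩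
      | exact key _ _ ⟨0, hqm 0 _ (by decide) (by decide) (by decide) (by decide), hqm 0 _ (by decide) (by decide) (by decide) (by decide)⟩
      | exact key _ _ ⟨2, hqm 2 _ (by decide) (by decide) (by decide) (by decide), hqm 2 _ (by decide) (by decide) (by decide) (by decide)⟩
  -- B i ≠ B j for i ≠ j
  have hxmem : ∀ (k : Fin 4) (M : ℕ), g ^ (n / P k) ∈ powKer G M ↔ P k ∣ M := by
    intro k M
    have hord : orderOf (g ^ (n / P k)) = P k := by
      rw [orderOf_pow, hg]
      rw [Nat.gcd_eq_right (Nat.div_dvd_of_dvd (hPdvd k))]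
      exact Nat.div_div_self (hPdvd k) hn
    rw [mem_powKer, ← orderOf_dvd_iff_pow_eq_one, hord]
  have hBneq : ∀ i j k : Fin 4, P k ∣ m i → ¬ P k ∣ m j → B i ≠ B j := by
    intro i j k h1 h2 heq
    have hx1 : g ^ (n / P k) ∈ B i := by
      simp only [hB_def]; exact (hxmem k (m i)).mpr h1
    rw [heq] at hx1
    simp only [hB_def] at hx1
    exact h2 ((hxmem k (m j)).mp hx1)
  have hnPm : ∀ k i : Fin 4, ¬ q k ∣ m i → ¬ P k ∣ m i := fun k i h hd =>
    h (dvd_trans (hqP k) hd)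
  have hPm1 : P 0 ∣ m 1 := by simp [hm_def]
  have hPm2 : P 1 ∣ m 2 := by simp [hm_def]
  have hPm3 : P 2 ∣ m 3 := by simp [hm_def]
  have hBdist : ∀ i j : Fin 4, i ≠ j → B i ≠ B j := by
    have e01 : B 1 ≠ B 0 := hBneq 1 0 0 hPm1
      (hnPm 0 0 (hqm 0 0 (by decide) (by decide) (by decide) (by decide)))
    have e02 : B 2 ≠ B 0 := hBneq 2 0 1 hPm2
      (hnPm 1 0 (hqm 1 0 (by decide) (by decide) (by decide) (by decide)))
    have e03 : B 3 ≠ B 0 := hBneq 3 0 2 hPm3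
      (hnPm 2 0 (hqm 2 0 (by decide) (by decide) (by decide) (by decide)))
    have e12 : B 1 ≠ B 2 := hBneq 1 2 0 hPm1
      (hnPm 0 2 (hqm 0 2 (by decide) (by decide) (by decide) (by decide)))
    have e13 : B 1 ≠ B 3 := hBneq 1 3 0 hPm1
      (hnPm 0 3 (hqm 0 3 (by decide) (by decide) (by decide) (by decide)))
    have e23 : B 2 ≠ B 3 := hBneq 2 3 1 hPm2
      (hnPm 1 3 (hqm 1 3 (by decide) (by decide) (by decide) (by decide)))
    intro i j hij
    fin_cases i <;> fin_cases j <;>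
      first
      | exact absurd rfl hij
      | exact e01
      | exact e01.symm
      | exact e02
      | exact e02.symm
      | exact e03
      | exact e03.symm
      | exact e12
      | exact e12.symm
      | exact e13
      | exact e13.symm
      | exact e23
      | exact e23.symm
  -- frattini conditions
  have hAfr : ¬ A ≤ frattini G := by
    intro hle
    have : B 0 ⊔ frattini G = ⊤ := by
      rw [eq_top_iff, ← hsup0, sup_comm A (B 0)]
      exact sup_le_sup_left hle (B 0)
    exact hBne 0 (frattini_nongenerating this)
  have hBfr : ∀ i, ¬ B i ≤ frattini G := by
    intro i hle
    have : A ⊔ frattini G = ⊤ := by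
      rw [eq_top_iff, ← hsup i]
      exact sup_le_sup_left hle A
    exact hAne (frattini_nongenerating this)
  refine ⟨A, B, ⟨hAne, hAfr⟩, fun i => ⟨hBne i, hBfr i⟩, fun i => ?_, fun i j hij => ?_⟩
  · haveI := hBnorm i
    rw [← Subgroup.mul_normal A (B i), hsup i, Subgroup.coe_top]
  · refine ⟨hBdist i j hij, fun heq => ?_⟩
    haveI := hBnorm j
    have : B i ⊔ B j = ⊤ := by
      rw [← Subgroup.coe_eq_univ, Subgroup.mul_normal (B i) (B j)]
      exact heq
    exact hsupBB i j hij this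
end

section
/- Let G be a finite group admitting a proper factorization G = AB, and suppose the factorization graph F(G) contains no induced 4-cycle. Then for every proper factorization G = AB, either A is normal in G or B is normal in G. -/
open scoped Pointwise

section Aux

variable {G : Type*} [Group G]

private def conjSub (g : G) (A : Subgroup G) : Subgroup G :=
  A.map (MulAut.conj g).toMonoidHom

private lemma mem_conjSub {g x : G} {A : Subgroup G} :
    x ∈ conjSub g A ↔ ∃ a ∈ A, g * a * g⁻¹ = x := by
  simp [conjSub, Subgroup.mem_map, MulAut.conj]

private lemma conjSub_one (A : Subgroup G) : conjSub 1 A = A := by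
  ext x
  simp [mem_conjSub]

private lemma conjSub_mem {g : G} {A : Subgroup G} (hg : g ∈ A) : conjSub g A = A := by
  ext x
  rw [mem_conjSub]
  constructor
  · rintro ⟨a, ha, rfl⟩
    exact A.mul_mem (A.mul_mem hg ha) (A.inv_mem hg)
  · intro hx
    exact ⟨g⁻¹ * x * g, A.mul_mem (A.mul_mem (A.inv_mem hg) hx) hg, by group⟩

private lemma mul_eq_univ_iff {A B : Subgroup G} :
    (A : Set G) * (B : Set G) = Set.univ ↔ ∀ g : G, ∃ a ∈ A, ∃ b ∈ B, a * b = g := by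
  constructor
  · intro h g
    have : g ∈ (A : Set G) * (B : Set G) := h ▸ Set.mem_univ g
    rcases Set.mem_mul.mp this with ⟨a, ha, b, hb, hab⟩
    exact ⟨a, ha, b, hb, hab⟩
  · intro h
    ext g
    simp only [Set.mem_univ, iff_true]
    rcases h g with ⟨a, ha, b, hb, hab⟩
    exact Set.mem_mul.mpr ⟨a, ha, b, hb, hab⟩

private lemma mul_univ_symm {A B : Subgroup G}
    (h : (A : Set G) * (B : Set G) = Set.univ) :
    (B : Set G) * (A : Set G) = Set.univ := by
  rw [mul_eq_univ_iff] at h ⊢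
  intro g
  rcases h g⁻¹ with ⟨a, ha, b, hb, hab⟩
  refine ⟨b⁻¹, B.inv_mem hb, a⁻¹, A.inv_mem ha, ?_⟩
  rw [← mul_inv_rev, hab, inv_inv]

private lemma eq_top_of_self_mul {A : Subgroup G}
    (h : (A : Set G) * (A : Set G) = Set.univ) : A = ⊤ := by
  rw [Subgroup.eq_top_iff']
  intro g
  rcases (mul_eq_univ_iff.mp h) g with ⟨a, ha, b, hb, hab⟩
  exact hab ▸ A.mul_mem ha hb

private lemma conjSub_ne_top {g : G} {A : Subgroup G} (hA : A ≠ ⊤) : conjSub g A ≠ ⊤ := by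
  intro h
  apply hA
  rw [Subgroup.eq_top_iff']
  intro x
  have : g * x * g⁻¹ ∈ conjSub g A := h ▸ Subgroup.mem_top _
  rcases mem_conjSub.mp this with ⟨a, ha, hax⟩
  have : a = x := mul_left_cancel (mul_right_cancel hax)
  exact this ▸ ha

/-- Key: if `G = AB` then `G = A^b B^a` for `a ∈ A`, `b ∈ B`. -/
private lemma conj_mul_conj {A B : Subgroup G}
    (h : (A : Set G) * (B : Set G) = Set.univ) {a b : G} (ha : a ∈ A) (hb : b ∈ B) :
    ((conjSub b A : Subgroup G) : Set G) * ((conjSub a B : Subgroup G) : Set G) = Set.univ := by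
  rw [mul_eq_univ_iff] at h ⊢
  intro g
  rcases h (b⁻¹ * a) with ⟨a₁, ha₁, b₁, hb₁, h₁⟩
  rcases h (b⁻¹ * g * a) with ⟨a₂, ha₂, b₂, hb₂, h₂⟩
  refine ⟨b * (a₂ * a₁⁻¹) * b⁻¹, mem_conjSub.mpr ⟨a₂ * a₁⁻¹, A.mul_mem ha₂ (A.inv_mem ha₁), rfl⟩,
    a * (b₁⁻¹ * b₂) * a⁻¹, mem_conjSub.mpr ⟨b₁⁻¹ * b₂, B.mul_mem (B.inv_mem hb₁) hb₂, rfl⟩, ?_⟩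
  have e0 : a₁⁻¹ * (b⁻¹ * a) * b₁⁻¹ = 1 := by rw [← h₁]; group
  have e1 : b * (a₂ * a₁⁻¹) * b⁻¹ * (a * (b₁⁻¹ * b₂) * a⁻¹)
      = b * a₂ * (a₁⁻¹ * (b⁻¹ * a) * b₁⁻¹) * b₂ * a⁻¹ := by group
  rw [e1, e0]
  have e2 : b * a₂ * 1 * b₂ * a⁻¹ = b * (a₂ * b₂) * a⁻¹ := by group
  rw [e2, h₂]
  group

/-- A proper subgroup times its own conjugate is never everything. -/
private lemma mul_conj_ne_univ {A : Subgroup G} (hA : A ≠ ⊤) (g : G) :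
    (A : Set G) * ((conjSub g A : Subgroup G) : Set G) ≠ Set.univ := by
  intro h
  rcases (mul_eq_univ_iff.mp h) g⁻¹ with ⟨a, ha, c, hc, hac⟩
  rcases mem_conjSub.mp hc with ⟨a', ha', rfl⟩
  -- a * (g * a' * g⁻¹) = g⁻¹  ⟹  g = a⁻¹ * a'⁻¹ ∈ A
  have h2 : a * g * a' = 1 := by
    have := congrArg (· * g) hac
    simpa [mul_assoc] using this
  have hgA : g ∈ A := by
    have h3 : g = a⁻¹ * a'⁻¹ := by
      have h4 : a⁻¹ * a'⁻¹ = g := by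
        have := congrArg (fun x => a⁻¹ * x * a'⁻¹) h2
        simpa [mul_assoc] using this.symm
      exact h4.symm

    exact h3 ▸ A.mul_mem (A.inv_mem ha) (A.inv_mem ha')
  rw [conjSub_mem hgA] at h
  exact hA (eq_top_of_self_mul h)

/-- If `G = AB` and `A` is not normal, some `b ∈ B` moves `A`. -/
private lemma exists_conj_ne {A B : Subgroup G}
    (h : (A : Set G) * (B : Set G) = Set.univ) (hn : ¬ A.Normal) :
    ∃ b ∈ B, conjSub b A ≠ A := by
  by_contra hcon
  push_neg at hcon
  apply hn
  constructor
  intro x hx g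
  rcases (mul_eq_univ_iff.mp h) g with ⟨a, ha, b, hb, rfl⟩
  have hAb : conjSub b A = A := hcon b hb
  have h1 : b * x * b⁻¹ ∈ A := by
    rw [← hAb]; exact mem_conjSub.mpr ⟨x, hx, rfl⟩
  have h2 : a * (b * x * b⁻¹) * a⁻¹ ∈ A := A.mul_mem (A.mul_mem ha h1) (A.inv_mem ha)
  have e : a * b * x * (a * b)⁻¹ = a * (b * x * b⁻¹) * a⁻¹ := by group
  rw [e]
  exact h2

end Aux

/-- The factorization graph of `G` has an induced 4-cycle (square): four distinct
vertices (proper subgroups not contained in the Frattini subgroup) with the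
cycle products equal to `G` and the diagonal products not equal to `G`. -/
def HasInducedSquare (G : Type*) [Group G] : Prop :=
  ∃ A B C D : Subgroup G,
    (A ≠ ⊤ ∧ ¬ A ≤ frattini G) ∧ (B ≠ ⊤ ∧ ¬ B ≤ frattini G) ∧
    (C ≠ ⊤ ∧ ¬ C ≤ frattini G) ∧ (D ≠ ⊤ ∧ ¬ D ≤ frattini G) ∧
    A ≠ B ∧ A ≠ C ∧ A ≠ D ∧ B ≠ C ∧ B ≠ D ∧ C ≠ D ∧
    (A : Set G) * (B : Set G) = Set.univ ∧ (B : Set G) * (C : Set G) = Set.univ ∧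
    (C : Set G) * (D : Set G) = Set.univ ∧ (D : Set G) * (A : Set G) = Set.univ ∧
    (A : Set G) * (C : Set G) ≠ Set.univ ∧ (B : Set G) * (D : Set G) ≠ Set.univ

section Frattini

variable {G : Type*} [Group G] [Finite G]

private lemma not_le_frattini {A B : Subgroup G} (hB : B ≠ ⊤)
    (h : (A : Set G) * (B : Set G) = Set.univ) : ¬ A ≤ frattini G := by
  intro hle
  apply hB
  apply frattini_nongenerating (K := B)
  rw [eq_top_iff]
  intro g _
  rcases (mul_eq_univ_iff.mp h) g with ⟨a, ha, b, hb, rfl⟩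
  exact Subgroup.mul_mem _ (Subgroup.mem_sup_right (hle ha)) (Subgroup.mem_sup_left hb)

end Frattini

theorem normal_factor_of_square_free
    (G : Type*) [Group G] [Finite G]
    (hsf : ¬ HasInducedSquare G) :
    ∀ A B : Subgroup G, A ≠ ⊤ → B ≠ ⊤ →
      (A : Set G) * (B : Set G) = Set.univ → A.Normal ∨ B.Normal := by
  intro A B hA hB hAB
  by_contra hcon
  push_neg at hcon
  obtain ⟨hAn, hBn⟩ := hcon
  obtain ⟨b, hb, hCA⟩ := exists_conj_ne hAB hAn
  obtain ⟨a, ha, hDB⟩ := exists_conj_ne (mul_univ_symm hAB) hBn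
  set C := conjSub b A with hC
  set D := conjSub a B with hD
  -- edges
  have eAB : (A : Set G) * (B : Set G) = Set.univ := hAB
  have eCD : (C : Set G) * (D : Set G) = Set.univ := conj_mul_conj hAB ha hb
  have eCB : (C : Set G) * (B : Set G) = Set.univ := by
    have := conj_mul_conj hAB (A.one_mem) hb
    rwa [conjSub_one] at this
  have eBC : (B : Set G) * (C : Set G) = Set.univ := mul_univ_symm eCB
  have eAD : (A : Set G) * (D : Set G) = Set.univ := by
    have := conj_mul_conj hAB ha (B.one_mem)
    rwa [conjSub_one] at this
  have eDA : (D : Set G) * (A : Set G) = Set.univ := mul_univ_symm eAD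
  -- non-edges (diagonals)
  have nAC : (A : Set G) * (C : Set G) ≠ Set.univ := mul_conj_ne_univ hA b
  have nBD : (B : Set G) * (D : Set G) ≠ Set.univ := mul_conj_ne_univ hB a
  -- properness
  have hCt : C ≠ ⊤ := conjSub_ne_top hA
  have hDt : D ≠ ⊤ := conjSub_ne_top hB
  -- distinctness
  have dAB : A ≠ B := fun h => hA (eq_top_of_self_mul (h ▸ eAB))
  have dAC : A ≠ C := fun h => hCA h.symm
  have dAD : A ≠ D := fun h => hA (eq_top_of_self_mul (by rw [h] at eAD ⊢; exact eAD))
  have dBC : B ≠ C := fun h => hB (eq_top_of_self_mul (by rw [h] at eCB ⊢; exact eCB))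
  have dBD : B ≠ D := fun h => hDB h.symm
  have dCD : C ≠ D := fun h => hCt (eq_top_of_self_mul (by rw [h] at eCD ⊢; exact eCD))
  exact hsf ⟨A, B, C, D,
    ⟨hA, not_le_frattini hB eAB⟩,
    ⟨hB, not_le_frattini hCt eBC⟩,
    ⟨hCt, not_le_frattini hDt eCD⟩,
    ⟨hDt, not_le_frattini hA eDA⟩,
    dAB, dAC, dAD, dBC, dBD, dCD,
    eAB, eBC, eCD, eDA, nAC, nBD⟩
end

section
/- Let G be a finite group with a proper factorization G = AB such that the factorization graph F(G) contains no induced 4-cycle. Then either A is a maximal subgroup of G or B is a maximal subgroup of G. -/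
open scoped Pointwise

/-- If `X * Y = G` with `X, Y ≤ K`, then `K = ⊤`. -/
lemma top_of_mul_eq_univ {G : Type*} [Group G] {X Y K : Subgroup G}
    (hXK : X ≤ K) (hYK : Y ≤ K) (h : (X : Set G) * (Y : Set G) = Set.univ) : K = ⊤ := by
  rw [Subgroup.eq_top_iff']
  intro g
  have hg : g ∈ (X : Set G) * (Y : Set G) := by rw [h]; trivial
  obtain ⟨x, hx, y, hy, rfl⟩ := hg
  exact K.mul_mem (hXK hx) (hYK hy)

lemma not_le_frattini_of_mul {G : Type*} [Group G] [Finite G] {X Y : Subgroup G}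
    (hY : Y ≠ ⊤) (h : (X : Set G) * (Y : Set G) = Set.univ) : ¬ X ≤ frattini G := by
  intro hXF
  obtain ⟨K, hK, hYK⟩ := (eq_top_or_exists_le_coatom Y).resolve_left hY
  exact hK.1 (top_of_mul_eq_univ (hXF.trans (frattini_le_coatom hK)) hYK h)

lemma ne_of_mul_univ {G : Type*} [Group G] {X Y : Subgroup G} (hX : X ≠ ⊤)
    (h : (X : Set G) * (Y : Set G) = Set.univ) : X ≠ Y := by
  rintro rfl
  exact hX (top_of_mul_eq_univ le_rfl le_rfl h)

theorem maximal_factor_of_square_free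
    (G : Type*) [Group G] [Finite G]
    (hsf : ¬ HasInducedSquare G) :
    ∀ A B : Subgroup G, A ≠ ⊤ → B ≠ ⊤ →
      (A : Set G) * (B : Set G) = Set.univ → IsCoatom A ∨ IsCoatom B := by
  intro A B hA hB hAB
  by_contra hcon
  push_neg at hcon
  obtain ⟨hAm, hBm⟩ := hcon
  -- get proper intermediate subgroups
  have hMex : ∃ M : Subgroup G, A < M ∧ M ≠ ⊤ := by
    by_contra h
    push_neg at h
    exact hAm ⟨hA, fun b hb => h b hb⟩
  have hNex : ∃ N : Subgroup G, B < N ∧ N ≠ ⊤ := by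
    by_contra h
    push_neg at h
    exact hBm ⟨hB, fun b hb => h b hb⟩
  obtain ⟨M, hAM, hM⟩ := hMex
  obtain ⟨N, hBN, hN⟩ := hNex
  have hBA : (B : Set G) * (A : Set G) = Set.univ := by
    have := congrArg (fun s : Set G => s⁻¹) hAB
    simpa [mul_inv_rev] using this
  -- edges
  have hBM : (B : Set G) * (M : Set G) = Set.univ :=
    Set.eq_univ_of_univ_subset (hBA ▸ Set.mul_subset_mul_left hAM.le)
  have hMN : (M : Set G) * (N : Set G) = Set.univ :=
    Set.eq_univ_of_univ_subset
      ((Set.eq_univ_of_univ_subset (hAB ▸ Set.mul_subset_mul_left hBN.le) : _) ▸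
        Set.mul_subset_mul_right hAM.le)
  have hNA : (N : Set G) * (A : Set G) = Set.univ :=
    Set.eq_univ_of_univ_subset (hBA ▸ Set.mul_subset_mul_right hBN.le)
  -- non-edges
  have hAMne : (A : Set G) * (M : Set G) ≠ Set.univ := by
    intro h
    exact hM (top_of_mul_eq_univ hAM.le le_rfl h)
  have hBNne : (B : Set G) * (N : Set G) ≠ Set.univ := by
    intro h
    exact hN (top_of_mul_eq_univ hBN.le le_rfl h)
  exact hsf ⟨A, B, M, N,
    ⟨hA, not_le_frattini_of_mul hB hAB⟩,
    ⟨hB, not_le_frattini_of_mul hM hBM⟩,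
    ⟨hM, not_le_frattini_of_mul hN hMN⟩,
    ⟨hN, not_le_frattini_of_mul hA hNA⟩,
    ne_of_mul_univ hA hAB, hAM.ne, ne_of_mul_univ hN hNA |>.symm,
    ne_of_mul_univ hB hBM, hBN.ne, ne_of_mul_univ hM hMN,
    hAB, hBM, hMN, hNA, hAMne, hBNne⟩
end

section
/- Let G be a finite group that is a product G = H₁H₂⋯Hₙ (n ≥ 4) of mutually permuting subgroups Hᵢ (HᵢHⱼ = HⱼHᵢ for all i,j) such that no proper subset of {H₁,…,Hₙ} generates G. Then the factorization graph of G contains an induced 4-cycle; explicitly, with K = H₅⋯Hₙ, the subgroups H₁H₂K, H₃H₄K, H₁H₂H₃K, H₁H₃H₄K induce a 4-cycle in F(G). -/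
open scoped Pointwise

section Aux

variable {G : Type*} [Group G]

/-- If two subgroups permute setwise, the set product is the join. -/
lemma aux_sup_coe_mul (X Y : Subgroup G)
    (h : (X : Set G) * (Y : Set G) = (Y : Set G) * (X : Set G)) :
    ((X ⊔ Y : Subgroup G) : Set G) = (X : Set G) * (Y : Set G) := by
  -- the product is a subgroup
  let S : Subgroup G :=
    { carrier := (X : Set G) * (Y : Set G)
      one_mem' := ⟨1, one_mem X, 1, one_mem Y, by simp⟩
      mul_mem' := by
        rintro a b ⟨x1, hx1, y1, hy1, rfl⟩ ⟨x2, hx2, y2, hy2, rfl⟩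
        have : y1 * x2 ∈ (Y : Set G) * (X : Set G) := ⟨y1, hy1, x2, hx2, rfl⟩
        rw [← h] at this
        obtain ⟨x', hx', y', hy', hxy⟩ := this
        have hxy' : x' * y' = y1 * x2 := hxy
        refine ⟨x1 * x', mul_mem hx1 hx', y' * y2, mul_mem hy' hy2, ?_⟩
        show x1 * x' * (y' * y2) = x1 * y1 * (x2 * y2)
        rw [mul_assoc, ← mul_assoc x' y' y2, hxy', mul_assoc y1 x2 y2,
          ← mul_assoc x1 y1 (x2 * y2)]
      inv_mem' := by
        rintro a ⟨x, hx, y, hy, rfl⟩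
        have : y⁻¹ * x⁻¹ ∈ (Y : Set G) * (X : Set G) :=
          ⟨y⁻¹, inv_mem hy, x⁻¹, inv_mem hx, rfl⟩
        rw [← h] at this
        simpa [mul_inv_rev] using this }
  apply le_antisymm
  · have hXS : X ≤ S := fun x hx => ⟨x, hx, 1, one_mem Y, by simp⟩
    have hYS : Y ≤ S := fun y hy => ⟨1, one_mem X, y, hy, by simp⟩
    exact (sup_le hXS hYS : X ⊔ Y ≤ S)
  · rintro a ⟨x, hx, y, hy, rfl⟩
    exact mul_mem (le_sup_left (a := X) (b := Y) hx) (le_sup_right (a := X) (b := Y) hy)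

/-- If `X` permutes with `Y` and `Z`, and `Y` permutes with `Z`, then `X` permutes
with `Y ⊔ Z`. -/
lemma aux_perm_sup (X Y Z : Subgroup G)
    (hXY : (X : Set G) * (Y : Set G) = (Y : Set G) * (X : Set G))
    (hXZ : (X : Set G) * (Z : Set G) = (Z : Set G) * (X : Set G))
    (hYZ : (Y : Set G) * (Z : Set G) = (Z : Set G) * (Y : Set G)) :
    (X : Set G) * ((Y ⊔ Z : Subgroup G) : Set G)
      = ((Y ⊔ Z : Subgroup G) : Set G) * (X : Set G) := by
  rw [aux_sup_coe_mul Y Z hYZ]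
  calc (X : Set G) * ((Y : Set G) * (Z : Set G))
      = ((X : Set G) * (Y : Set G)) * (Z : Set G) := by rw [mul_assoc]
    _ = ((Y : Set G) * (X : Set G)) * (Z : Set G) := by rw [hXY]
    _ = (Y : Set G) * ((X : Set G) * (Z : Set G)) := by rw [mul_assoc]
    _ = (Y : Set G) * ((Z : Set G) * (X : Set G)) := by rw [hXZ]
    _ = ((Y : Set G) * (Z : Set G)) * (X : Set G) := by rw [mul_assoc]

variable {ι : Type*} [DecidableEq ι]

/-- A single member of a pairwise permuting family permutes with any finite join. -/
lemma aux_perm_biSup (H : ι → Subgroup G)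
    (hperm : ∀ i j, (H i : Set G) * (H j : Set G) = (H j : Set G) * (H i : Set G))
    (S : Finset ι) :
    ∀ j, (H j : Set G) * ((⨆ i ∈ S, H i : Subgroup G) : Set G)
      = ((⨆ i ∈ S, H i : Subgroup G) : Set G) * (H j : Set G) := by
  classical
  induction S using Finset.induction_on with
  | empty => intro j; simp
  | insert a s ha ih =>
      intro j
      rw [Finset.iSup_insert]
      exact aux_perm_sup (H j) (H a) _ (hperm j a) (ih j) (ih a)

/-- Finite joins of a pairwise permuting family permute. -/
lemma aux_perm_biSup_biSup (H : ι → Subgroup G)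
    (hperm : ∀ i j, (H i : Set G) * (H j : Set G) = (H j : Set G) * (H i : Set G))
    (T : Finset ι) :
    ∀ S : Finset ι, ((⨆ i ∈ S, H i : Subgroup G) : Set G)
        * ((⨆ i ∈ T, H i : Subgroup G) : Set G)
      = ((⨆ i ∈ T, H i : Subgroup G) : Set G) * ((⨆ i ∈ S, H i : Subgroup G) : Set G) := by
  classical
  induction T using Finset.induction_on with
  | empty => intro S; simp
  | insert a t ha ih =>
      intro S
      rw [Finset.iSup_insert]
      exact aux_perm_sup _ (H a) _ (aux_perm_biSup H hperm S a).symm (ih S)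
        (aux_perm_biSup H hperm t a)

/-- The set product of two finite joins of a pairwise permuting family is the join. -/
lemma aux_mul_biSup (H : ι → Subgroup G)
    (hperm : ∀ i j, (H i : Set G) * (H j : Set G) = (H j : Set G) * (H i : Set G))
    (S T : Finset ι) :
    ((⨆ i ∈ S, H i : Subgroup G) : Set G) * ((⨆ i ∈ T, H i : Subgroup G) : Set G)
      = (((⨆ i ∈ S, H i) ⊔ (⨆ i ∈ T, H i) : Subgroup G) : Set G) :=
  (aux_sup_coe_mul _ _ (aux_perm_biSup_biSup H hperm T S)).symm

lemma aux_not_le_frattini [Finite G] (X Y : Subgroup G)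
    (hXY : X ⊔ Y = ⊤) (hY : Y ≠ ⊤) : ¬ X ≤ frattini G := by
  intro hX
  apply hY
  apply frattini_nongenerating
  rw [eq_top_iff, ← hXY]
  exact sup_le (le_trans hX le_sup_right) le_sup_left

end Aux

theorem induced_square_of_mutually_permuting_product
    (G : Type*) [Group G] [Finite G] (n : ℕ) (hn : 4 ≤ n)
    (H : Fin n → Subgroup G)
    (hperm : ∀ i j, (H i : Set G) * (H j : Set G) = (H j : Set G) * (H i : Set G))
    (hprod : (⨆ i, H i) = ⊤)
    (hmin : ∀ S : Finset (Fin n), S ≠ Finset.univ → (⨆ i ∈ S, H i) ≠ ⊤) :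
    ∀ K : Subgroup G, K = (⨆ i : Fin n, ⨆ _ : 4 ≤ (i : ℕ), H i) →
    ∀ A B C D : Subgroup G,
      A = H ⟨0, by omega⟩ ⊔ H ⟨1, by omega⟩ ⊔ K →
      B = H ⟨2, by omega⟩ ⊔ H ⟨3, by omega⟩ ⊔ K →
      C = H ⟨0, by omega⟩ ⊔ H ⟨1, by omega⟩ ⊔ H ⟨2, by omega⟩ ⊔ K →
      D = H ⟨0, by omega⟩ ⊔ H ⟨2, by omega⟩ ⊔ H ⟨3, by omega⟩ ⊔ K →
      (A ≠ ⊤ ∧ ¬ A ≤ frattini G) ∧ (B ≠ ⊤ ∧ ¬ B ≤ frattini G) ∧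
      (C ≠ ⊤ ∧ ¬ C ≤ frattini G) ∧ (D ≠ ⊤ ∧ ¬ D ≤ frattini G) ∧
      A ≠ B ∧ A ≠ C ∧ A ≠ D ∧ B ≠ C ∧ B ≠ D ∧ C ≠ D ∧
      (A : Set G) * (B : Set G) = Set.univ ∧ (B : Set G) * (C : Set G) = Set.univ ∧
      (C : Set G) * (D : Set G) = Set.univ ∧ (D : Set G) * (A : Set G) = Set.univ ∧
      (A : Set G) * (C : Set G) ≠ Set.univ ∧ (B : Set G) * (D : Set G) ≠ Set.univ := by
  classical
  intro K hK A B C D hA hB hC hD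
  set i0 : Fin n := ⟨0, by omega⟩
  set i1 : Fin n := ⟨1, by omega⟩
  set i2 : Fin n := ⟨2, by omega⟩
  set i3 : Fin n := ⟨3, by omega⟩
  -- the finset of indices ≥ 4
  set Fk : Finset (Fin n) := Finset.univ.filter (fun i => 4 ≤ (i : ℕ)) with hFk
  have hKF : K = ⨆ i ∈ Fk, H i := by
    rw [hK]
    apply le_antisymm
    · exact iSup_le fun i => iSup_le fun hi =>
        le_biSup H (Finset.mem_filter.mpr ⟨Finset.mem_univ i, hi⟩)
    · exact iSup_le fun i => iSup_le fun hi => by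
        have hi4 : 4 ≤ (i : ℕ) := (Finset.mem_filter.mp hi).2
        exact le_iSup_of_le i (le_iSup_of_le hi4 le_rfl)
  -- index sets
  set SA : Finset (Fin n) := insert i0 (insert i1 Fk) with hSA
  set SB : Finset (Fin n) := insert i2 (insert i3 Fk) with hSB
  set SC : Finset (Fin n) := insert i0 (insert i1 (insert i2 Fk)) with hSC
  set SD : Finset (Fin n) := insert i0 (insert i2 (insert i3 Fk)) with hSD
  have hAS : A = ⨆ i ∈ SA, H i := by
    rw [hA, hKF, hSA, Finset.iSup_insert, Finset.iSup_insert, sup_assoc]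
  have hBS : B = ⨆ i ∈ SB, H i := by
    rw [hB, hKF, hSB, Finset.iSup_insert, Finset.iSup_insert, sup_assoc]
  have hCS : C = ⨆ i ∈ SC, H i := by
    rw [hC, hKF, hSC, Finset.iSup_insert, Finset.iSup_insert, Finset.iSup_insert,
      sup_assoc, sup_assoc]
  have hDS : D = ⨆ i ∈ SD, H i := by
    rw [hD, hKF, hSD, Finset.iSup_insert, Finset.iSup_insert, Finset.iSup_insert,
      sup_assoc, sup_assoc]
  -- membership facts
  have memSA : ∀ i : Fin n, i ∈ SA ↔ ((i : ℕ) = 0 ∨ (i : ℕ) = 1 ∨ 4 ≤ (i : ℕ)) := by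
    intro i
    simp [hSA, hFk, Fin.ext_iff, i0, i1]
  have memSB : ∀ i : Fin n, i ∈ SB ↔ ((i : ℕ) = 2 ∨ (i : ℕ) = 3 ∨ 4 ≤ (i : ℕ)) := by
    intro i
    simp [hSB, hFk, Fin.ext_iff, i2, i3]
  have memSC : ∀ i : Fin n, i ∈ SC ↔
      ((i : ℕ) = 0 ∨ (i : ℕ) = 1 ∨ (i : ℕ) = 2 ∨ 4 ≤ (i : ℕ)) := by
    intro i
    simp [hSC, hFk, Fin.ext_iff, i0, i1, i2]
  have memSD : ∀ i : Fin n, i ∈ SD ↔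
      ((i : ℕ) = 0 ∨ (i : ℕ) = 2 ∨ (i : ℕ) = 3 ∨ 4 ≤ (i : ℕ)) := by
    intro i
    simp [hSD, hFk, Fin.ext_iff, i0, i2, i3]
  -- properness of index sets
  have ne_univ_of_not_mem : ∀ (S : Finset (Fin n)) (i : Fin n), i ∉ S → S ≠ Finset.univ := by
    intro S i hi h
    exact hi (h ▸ Finset.mem_univ i)
  have hSAne : SA ≠ Finset.univ :=
    ne_univ_of_not_mem SA i2 (by rw [memSA]; simp [i2])
  have hSBne : SB ≠ Finset.univ :=
    ne_univ_of_not_mem SB i0 (by rw [memSB]; simp [i0])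
  have hSCne : SC ≠ Finset.univ :=
    ne_univ_of_not_mem SC i3 (by rw [memSC]; simp [i3])
  have hSDne : SD ≠ Finset.univ :=
    ne_univ_of_not_mem SD i1 (by rw [memSD]; simp [i1])
  -- non-topness
  have hAne : A ≠ ⊤ := hAS ▸ hmin SA hSAne
  have hBne : B ≠ ⊤ := hBS ▸ hmin SB hSBne
  have hCne : C ≠ ⊤ := hCS ▸ hmin SC hSCne
  have hDne : D ≠ ⊤ := hDS ▸ hmin SD hSDne
  -- union-covering joins are ⊤
  have sup_union : ∀ S T : Finset (Fin n),
      (⨆ i ∈ S, H i) ⊔ (⨆ i ∈ T, H i) = ⨆ i ∈ S ∪ T, H i :=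
    fun S T => (Finset.iSup_union).symm
  have top_of : ∀ S T : Finset (Fin n), (∀ i : Fin n, i ∈ S ∪ T) →
      (⨆ i ∈ S, H i) ⊔ (⨆ i ∈ T, H i) = ⊤ := by
    intro S T hST
    rw [sup_union S T, eq_top_iff, ← hprod]
    exact iSup_le fun i => le_biSup H (hST i)
  have hAB : A ⊔ B = ⊤ := by
    rw [hAS, hBS]
    apply top_of
    intro i
    rw [Finset.mem_union, memSA, memSB]
    omega
  have hBC : B ⊔ C = ⊤ := by
    rw [hBS, hCS]
    apply top_of
    intro i
    rw [Finset.mem_union, memSB, memSC]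
    omega
  have hCD : C ⊔ D = ⊤ := by
    rw [hCS, hDS]
    apply top_of
    intro i
    rw [Finset.mem_union, memSC, memSD]
    omega
  have hDA : D ⊔ A = ⊤ := by
    rw [hDS, hAS]
    apply top_of
    intro i
    rw [Finset.mem_union, memSD, memSA]
    omega
  -- distinctness
  have hABne : A ≠ B := by
    intro h
    rw [h, sup_idem] at hAB
    exact hBne hAB
  have hACne : A ≠ C := by
    intro h
    -- A ⊔ H i3 = C ⊔ H i3 = ⊤, but SA ∪ {i3} is proper
    have h3 : (H i3 : Subgroup G) = ⨆ i ∈ ({i3} : Finset (Fin n)), H i := by simp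
    have htop : C ⊔ H i3 = ⊤ := by
      rw [hCS, h3]
      apply top_of
      intro i
      rw [Finset.mem_union, memSC, Finset.mem_singleton, Fin.ext_iff]
      simp only [i3]
      omega
    have hne : A ⊔ H i3 ≠ ⊤ := by
      rw [hAS, h3, sup_union]
      apply hmin
      apply ne_univ_of_not_mem _ i2
      rw [Finset.mem_union, memSA, Finset.mem_singleton, Fin.ext_iff]
      simp [i2, i3]
    exact hne (h ▸ htop)
  have hADne : A ≠ D := by
    intro h
    rw [h, sup_idem] at hDA
    exact hAne (h ▸ hDA)
  have hBCne : B ≠ C := by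
    intro h
    rw [h, sup_idem] at hBC
    exact hCne hBC
  have hBDne : B ≠ D := by
    intro h
    have h1 : (H i1 : Subgroup G) = ⨆ i ∈ ({i1} : Finset (Fin n)), H i := by simp
    have htop : D ⊔ H i1 = ⊤ := by
      rw [hDS, h1]
      apply top_of
      intro i
      rw [Finset.mem_union, memSD, Finset.mem_singleton, Fin.ext_iff]
      simp only [i1]
      omega
    have hne : B ⊔ H i1 ≠ ⊤ := by
      rw [hBS, h1, sup_union]
      apply hmin
      apply ne_univ_of_not_mem _ i0
      rw [Finset.mem_union, memSB, Finset.mem_singleton, Fin.ext_iff]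
      simp [i0, i1]
    exact hne (h ▸ htop)
  have hCDne : C ≠ D := by
    intro h
    rw [h, sup_idem] at hCD
    exact hDne hCD
  -- edge products
  have prodAB : (A : Set G) * (B : Set G) = Set.univ := by
    rw [hAS, hBS, aux_mul_biSup H hperm, ← hAS, ← hBS, hAB, Subgroup.coe_top]
  have prodBC : (B : Set G) * (C : Set G) = Set.univ := by
    rw [hBS, hCS, aux_mul_biSup H hperm, ← hBS, ← hCS, hBC, Subgroup.coe_top]
  have prodCD : (C : Set G) * (D : Set G) = Set.univ := by
    rw [hCS, hDS, aux_mul_biSup H hperm, ← hCS, ← hDS, hCD, Subgroup.coe_top]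
  have prodDA : (D : Set G) * (A : Set G) = Set.univ := by
    rw [hDS, hAS, aux_mul_biSup H hperm, ← hDS, ← hAS, hDA, Subgroup.coe_top]
  -- non-edges
  have prodAC : (A : Set G) * (C : Set G) ≠ Set.univ := by
    rw [hAS, hCS, aux_mul_biSup H hperm, sup_union]
    intro h
    refine hmin _ ?_ (Subgroup.coe_eq_univ.mp h)
    apply ne_univ_of_not_mem _ i3
    rw [Finset.mem_union, memSA, memSC]
    simp [i3]
  have prodBD : (B : Set G) * (D : Set G) ≠ Set.univ := by
    rw [hBS, hDS, aux_mul_biSup H hperm, sup_union]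
    intro h
    refine hmin _ ?_ (Subgroup.coe_eq_univ.mp h)
    apply ne_univ_of_not_mem _ i1
    rw [Finset.mem_union, memSB, memSD]
    simp [i1]
  -- frattini conditions
  have hAF : ¬ A ≤ frattini G := aux_not_le_frattini A B hAB hBne
  have hBF : ¬ B ≤ frattini G := aux_not_le_frattini B A (sup_comm A B ▸ hAB) hAne
  have hCF : ¬ C ≤ frattini G := aux_not_le_frattini C D hCD hDne
  have hDF : ¬ D ≤ frattini G := aux_not_le_frattini D C (sup_comm C D ▸ hCD) hCne
  exact ⟨⟨hAne, hAF⟩, ⟨hBne, hBF⟩, ⟨hCne, hCF⟩, ⟨hDne, hDF⟩,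
    hABne, hACne, hADne, hBCne, hBDne, hCDne,
    prodAB, prodBC, prodCD, prodDA, prodAC, prodBD⟩
end

section
/- Let G be a finite solvable group whose order has exactly three distinct prime divisors p₁, p₂, p₃, and suppose the factorization graph F(G) is square-free (no induced 4-cycle). If G = P₁P₂P₃ with mutually permuting Sylow pᵢ-subgroups Pᵢ, and every factorization G = Pᵢ(PⱼPₖ) forces PⱼPₖ to be a normal maximal subgroup, then each Pᵢ is cyclic of order pᵢ and normal in G; hence G ≅ C_{p₁p₂p₃}. -/
open scoped Pointwise

section Aux

variable {G : Type*} [Group G]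

lemma mul_subset_sup' (H K : Subgroup G) : (H : Set G) * (K : Set G) ⊆ ↑(H ⊔ K) := by
  rintro x ⟨a, ha, b, hb, rfl⟩
  exact Subgroup.mul_mem_sup ha hb

lemma coe_sup_of_comm' (H K : Subgroup G)
    (hc : (H : Set G) * (K : Set G) = (K : Set G) * (H : Set G)) :
    ((H ⊔ K : Subgroup G) : Set G) = (H : Set G) * (K : Set G) := by
  let S : Subgroup G :=
  { carrier := (H : Set G) * (K : Set G)
    one_mem' := ⟨1, H.one_mem, 1, K.one_mem, mul_one 1⟩
    mul_mem' := by
      rintro a b ⟨h1, hh1, k1, hk1, rfl⟩ ⟨h2, hh2, k2, hk2, rfl⟩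
      have hmem : k1 * h2 ∈ (K : Set G) * (H : Set G) := ⟨k1, hk1, h2, hh2, rfl⟩
      rw [← hc] at hmem
      obtain ⟨h3, hh3, k3, hk3, he⟩ := hmem
      refine ⟨h1 * h3, H.mul_mem hh1 hh3, k3 * k2, K.mul_mem hk3 hk2, ?_⟩
      show h1 * h3 * (k3 * k2) = h1 * k1 * (h2 * k2)
      have he' : h3 * k3 = k1 * h2 := he
      have h' : h1 * h3 * (k3 * k2) = h1 * (h3 * k3) * k2 := by group
      rw [h', he']; group
    inv_mem' := by
      rintro a ⟨h, hh, k, hk, rfl⟩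
      have hmem : (h * k)⁻¹ ∈ (K : Set G) * (H : Set G) :=
        ⟨k⁻¹, K.inv_mem hk, h⁻¹, H.inv_mem hh, (mul_inv_rev h k).symm⟩
      rw [← hc] at hmem
      exact hmem }
  have hS : H ⊔ K = S := by
    apply le_antisymm
    · exact sup_le (fun x hx => ⟨x, hx, 1, K.one_mem, mul_one x⟩)
        (fun x hx => ⟨1, H.one_mem, x, hx, one_mul x⟩)
    · exact fun x hx => mul_subset_sup' H K hx
  rw [hS]; rfl

lemma card_sup_of_comm' (H K : Subgroup G)
    (hc : (H : Set G) * (K : Set G) = (K : Set G) * (H : Set G))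
    (hd : Disjoint H K) :
    Nat.card ↥(H ⊔ K) = Nat.card H * Nat.card K := by
  have hset := coe_sup_of_comm' H K hc
  have h1 : Nat.card ↥(H ⊔ K) = Nat.card ↥((H : Set G) * (K : Set G)) :=
    Nat.card_congr (Equiv.setCongr hset)
  rw [h1, ← Nat.card_prod]
  symm
  apply Nat.card_congr
  refine Equiv.ofBijective
    (fun p : H × K => ⟨(p.1 : G) * (p.2 : G), Set.mul_mem_mul p.1.2 p.2.2⟩) ⟨?_, ?_⟩
  · intro a b hab
    exact Subgroup.mul_injective_of_disjoint hd (congrArg Subtype.val hab)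
  · rintro ⟨x, a, ha, b, hb, rfl⟩
    exact ⟨(⟨a, ha⟩, ⟨b, hb⟩), rfl⟩

end Aux

theorem cyclic_of_three_primes_square_free
    (G : Type*) [Group G] [Finite G] [Group.IsSolvable G]
    (p : Fin 3 → ℕ) (hp : ∀ i, (p i).Prime) (hdist : Function.Injective p)
    (hpi : (Nat.card G).primeFactors = {p 0, p 1, p 2})
    (hsf : ¬ HasInducedSquare G)
    (P : Fin 3 → Subgroup G)
    (hSyl : ∀ i, IsPGroup (p i) (P i) ∧ ¬ p i ∣ (P i).index)
    (hperm : ∀ i j, (P i : Set G) * (P j : Set G) = (P j : Set G) * (P i : Set G))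
    (hprod : (⨆ i, P i) = ⊤)
    (hnormalmax : ∀ i j k : Fin 3, ({i, j, k} : Finset (Fin 3)) = Finset.univ →
      (P j ⊔ P k).Normal ∧ IsCoatom (P j ⊔ P k)) :
    (∀ i, Nat.card (P i) = p i ∧ (P i).Normal ∧ IsCyclic (P i)) ∧
      IsCyclic G ∧ Nat.card G = p 0 * p 1 * p 2 := by
  classical
  -- combinatorial facts about `Fin 3`
  have hU : ∀ i : Fin 3, ({i, i + 1, i + 2} : Finset (Fin 3)) = Finset.univ := by decide
  have hU2 : ∀ i : Fin 3, ({i + 2, i, i + 1} : Finset (Fin 3)) = Finset.univ := by decide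
  have hU3 : ∀ i : Fin 3, ({i + 1, i, i + 2} : Finset (Fin 3)) = Finset.univ := by decide
  have hne1 : ∀ i : Fin 3, i ≠ i + 1 := by decide
  have hne2 : ∀ i : Fin 3, i ≠ i + 2 := by decide
  have hne3 : ∀ i : Fin 3, i + 1 ≠ i + 2 := by decide
  have hall : ∀ i l : Fin 3, l = i ∨ l = i + 1 ∨ l = i + 2 := by decide
  -- divisibility facts
  have hdvdG : ∀ i, p i ∣ Nat.card G := by
    intro i
    have hmem : p i ∈ (Nat.card G).primeFactors := by
      rw [hpi]; fin_cases i <;> simp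
    exact (Nat.mem_primeFactors.mp hmem).2.1
  have hexp : ∀ i, ∃ n, Nat.card (P i) = p i ^ n := by
    intro i
    haveI : Fact (p i).Prime := ⟨hp i⟩
    exact IsPGroup.iff_card.mp (hSyl i).1
  have hpdvdq : ∀ i, p i ∣ Nat.card (P i) := by
    intro i
    have h := (P i).card_mul_index
    have hd : p i ∣ Nat.card (P i) * (P i).index := by rw [h]; exact hdvdG i
    exact ((hp i).dvd_mul.mp hd).resolve_right (hSyl i).2
  have hq1 : ∀ i, 1 < Nat.card (P i) := fun i =>
    lt_of_lt_of_le (hp i).one_lt (Nat.le_of_dvd Nat.card_pos (hpdvdq i))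
  have hcopP : ∀ i j : Fin 3, i ≠ j → Nat.Coprime (p i) (Nat.card (P j)) := by
    intro i j hij
    obtain ⟨b, hb⟩ := hexp j
    rw [hb]
    exact ((Nat.coprime_primes (hp i) (hp j)).mpr (fun h => hij (hdist h))).pow_right b
  have hcop : ∀ i j : Fin 3, i ≠ j → Nat.Coprime (Nat.card (P i)) (Nat.card (P j)) := by
    intro i j hij
    obtain ⟨a, ha⟩ := hexp i
    rw [ha]
    exact (hcopP i j hij).pow_left a
  have hsupcard : ∀ i j : Fin 3, i ≠ j →
      Nat.card ↥(P i ⊔ P j) = Nat.card (P i) * Nat.card (P j) := fun i j hij =>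
    card_sup_of_comm' _ _ (hperm i j)
      (disjoint_iff.mpr (Subgroup.inf_eq_bot_of_coprime (hcop i j hij)))
  -- joins to the top
  have htop : ∀ i : Fin 3, P i ⊔ (P (i + 1) ⊔ P (i + 2)) = ⊤ := by
    intro i
    rw [eq_top_iff, ← hprod]
    apply iSup_le
    intro l
    rcases hall i l with h | h | h
    · subst h; exact le_sup_left
    · subst h; exact le_trans le_sup_left le_sup_right
    · subst h; exact le_trans le_sup_right le_sup_right
  -- every Sylow is normal
  have hnorm : ∀ i, (P i).Normal := by
    intro i
    have hN1 := (hnormalmax (i + 2) i (i + 1) (hU2 i)).1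
    have hN2 := (hnormalmax (i + 1) i (i + 2) (hU3 i)).1
    set N : Subgroup G := (P i ⊔ P (i + 1)) ⊓ (P i ⊔ P (i + 2)) with hNdef
    have hle : P i ≤ N := le_inf le_sup_left le_sup_left
    have hd1 : Nat.card N ∣ Nat.card (P i) * Nat.card (P (i + 1)) := by
      rw [← hsupcard i (i + 1) (hne1 i)]
      exact Subgroup.card_dvd_of_le inf_le_left
    have hd2 : Nat.card N ∣ Nat.card (P i) * Nat.card (P (i + 2)) := by
      rw [← hsupcard i (i + 2) (hne2 i)]
      exact Subgroup.card_dvd_of_le inf_le_right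
    have hgcd := Nat.dvd_gcd hd1 hd2
    have hg1 : Nat.gcd (Nat.card (P (i + 1))) (Nat.card (P (i + 2))) = 1 :=
      hcop (i + 1) (i + 2) (hne3 i)
    rw [Nat.gcd_mul_left, hg1, mul_one] at hgcd
    have heqcard : Nat.card N = Nat.card (P i) :=
      Nat.dvd_antisymm hgcd (Subgroup.card_dvd_of_le hle)
    have heq : P i = N := Subgroup.eq_of_le_of_card_ge hle heqcard.le
    rw [heq]
    exact ⟨fun n hn g => Subgroup.mem_inf.mpr
      ⟨hN1.conj_mem n (Subgroup.mem_inf.mp hn).1 g,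
       hN2.conj_mem n (Subgroup.mem_inf.mp hn).2 g⟩⟩
  -- cardinality of `G`
  have hcardQ : ∀ i : Fin 3,
      Nat.card ↥(P (i + 1) ⊔ P (i + 2)) = Nat.card (P (i + 1)) * Nat.card (P (i + 2)) :=
    fun i => hsupcard (i + 1) (i + 2) (hne3 i)
  have hGcard' : ∀ i : Fin 3,
      Nat.card G = Nat.card (P i) * Nat.card ↥(P (i + 1) ⊔ P (i + 2)) := by
    intro i
    haveI := (hnormalmax i (i + 1) (i + 2) (hU i)).1
    have hc : (P i : Set G) * ↑(P (i + 1) ⊔ P (i + 2)) =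
        (↑(P (i + 1) ⊔ P (i + 2)) : Set G) * (P i : Set G) :=
      Subgroup.set_mul_normal_comm (P i : Set G) _
    have hdisj : Disjoint (P i) (P (i + 1) ⊔ P (i + 2)) := by
      refine disjoint_iff.mpr (Subgroup.inf_eq_bot_of_coprime ?_)
      rw [hcardQ i]
      exact Nat.Coprime.mul_right (hcop i (i + 1) (hne1 i)) (hcop i (i + 2) (hne2 i))
    rw [← Subgroup.card_top (G := G), ← htop i]
    exact card_sup_of_comm' _ _ hc hdisj
  -- every Sylow has prime order (using square-freeness)
  have hprime : ∀ i, Nat.card (P i) = p i := by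
    intro i
    by_contra hnec
    obtain ⟨a, ha⟩ := hexp i
    haveI : Fact (p i).Prime := ⟨hp i⟩
    haveI : Fintype ↥(P i) := Fintype.ofFinite _
    obtain ⟨x, hx⟩ := exists_prime_orderOf_dvd_card (G := ↥(P i)) (p i)
      (by rw [← Nat.card_eq_fintype_card]; exact hpdvdq i)
    set M : Subgroup G := Subgroup.map (P i).subtype (Subgroup.zpowers x) with hMdef
    have hMcard : Nat.card M = p i := by
      have h1 : Nat.card M = Nat.card (Subgroup.zpowers x) :=
        Nat.card_congr
          ((Subgroup.equivMapOfInjective _ _ (Subgroup.subtype_injective _)).symm.toEquiv)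
      rw [h1, Nat.card_zpowers, hx]
    have hMle : M ≤ P i := by
      rintro y ⟨z, hz, rfl⟩
      exact z.2
    set Q : Subgroup G := P (i + 1) ⊔ P (i + 2) with hQdef
    set B : Subgroup G := P i ⊔ P (i + 2) with hBdef
    have hQprop := hnormalmax i (i + 1) (i + 2) (hU i)
    have hBprop := hnormalmax (i + 1) i (i + 2) (hU3 i)
    haveI hQn : Q.Normal := hQprop.1
    haveI hBn : B.Normal := hBprop.1
    haveI hDn : (P i).Normal := hnorm i
    set A : Subgroup G := M ⊔ Q with hAdef
    have hQcard : Nat.card Q = Nat.card (P (i + 1)) * Nat.card (P (i + 2)) := hcardQ i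
    have hQcard1 : 1 < Nat.card Q := by
      rw [hQcard]
      calc 1 < Nat.card (P (i + 1)) := hq1 (i + 1)
        _ ≤ Nat.card (P (i + 1)) * Nat.card (P (i + 2)) :=
          Nat.le_mul_of_pos_right _ Nat.card_pos
    have hMQcop : Nat.Coprime (Nat.card M) (Nat.card Q) := by
      rw [hMcard, hQcard]
      exact Nat.Coprime.mul_right (hcopP i (i + 1) (hne1 i)) (hcopP i (i + 2) (hne2 i))
    have hAcard : Nat.card A = p i * Nat.card Q := by
      have hc : (M : Set G) * (Q : Set G) = (Q : Set G) * (M : Set G) :=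
        Subgroup.set_mul_normal_comm (M : Set G) Q
      rw [card_sup_of_comm' M Q hc
        (disjoint_iff.mpr (Subgroup.inf_eq_bot_of_coprime hMQcop)), hMcard]
    have hQtop : P i ⊔ Q = ⊤ := htop i
    -- joins to top
    have hAB : A ⊔ B = ⊤ := by
      rw [eq_top_iff, ← hQtop]
      exact sup_le ((le_sup_left : P i ≤ B).trans le_sup_right)
        ((le_sup_right : Q ≤ A).trans le_sup_left)
    have hBC : B ⊔ Q = ⊤ := by
      rw [eq_top_iff, ← hQtop]
      exact sup_le ((le_sup_left : P i ≤ B).trans le_sup_left) le_sup_right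
    have hCD : Q ⊔ P i = ⊤ := by rw [sup_comm]; exact hQtop
    have hAD : A ⊔ P i = ⊤ := by
      rw [eq_top_iff, ← hQtop]
      exact sup_le le_sup_right ((le_sup_right : Q ≤ A).trans le_sup_left)
    -- A and D are proper
    have hAne : A ≠ ⊤ := by
      intro h
      have hcA : Nat.card A = Nat.card G := by rw [h, Subgroup.card_top]
      rw [hAcard, hGcard' i] at hcA
      have := Nat.eq_of_mul_eq_mul_right (Nat.card_pos (α := ↥Q)) hcA
      exact hnec (this.symm)
    have hDne : (P i) ≠ ⊤ := by
      intro h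
      have hcD : Nat.card (P i) = Nat.card G := by rw [h, Subgroup.card_top]
      rw [hGcard' i] at hcD
      have h1 : Nat.card (P i) * 1 = Nat.card (P i) * Nat.card ↥Q := by
        rw [mul_one]; exact hcD
      have := Nat.eq_of_mul_eq_mul_left (Nat.card_pos (α := ↥(P i))) h1
      omega
    have hBne : B ≠ ⊤ := hBprop.2.1
    have hCne : Q ≠ ⊤ := hQprop.2.1
    -- Frattini conditions
    have hAfr : ¬ A ≤ frattini G := by
      intro hA
      have hAleB : A ≤ B := hA.trans (frattini_le_coatom hBprop.2)
      exact hBne ((sup_eq_right.mpr hAleB).symm.trans hAB)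
    have hBfr : ¬ B ≤ frattini G := by
      intro hB
      have hBleQ : B ≤ Q := hB.trans (frattini_le_coatom hQprop.2)
      exact hCne ((sup_eq_right.mpr hBleQ).symm.trans hBC)
    have hCfr : ¬ Q ≤ frattini G := by
      intro hC
      have hQleB : Q ≤ B := hC.trans (frattini_le_coatom hBprop.2)
      exact hBne ((sup_eq_left.mpr hQleB).symm.trans hBC)
    have hDfr : ¬ (P i) ≤ frattini G := by
      intro hD
      have hDleQ : P i ≤ Q := hD.trans (frattini_le_coatom hQprop.2)
      exact hCne ((sup_eq_left.mpr hDleQ).symm.trans hCD)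
    -- distinctness helper
    have hneq : ∀ (X Y Z : Subgroup G), Z ≤ X → 1 < Nat.card Z →
        Nat.Coprime (Nat.card Z) (Nat.card Y) → X ≠ Y := by
      intro X Y Z hZX h1 hco heq
      have hd := Subgroup.card_dvd_of_le (hZX.trans heq.le)
      have := hco.eq_one_of_dvd hd
      omega
    have hBcard : Nat.card B = Nat.card (P i) * Nat.card (P (i + 2)) :=
      hsupcard i (i + 2) (hne2 i)
    have hPjleA : P (i + 1) ≤ A := (le_sup_left : P (i + 1) ≤ Q).trans le_sup_right
    have cAB : A ≠ B := by
      refine hneq A B (P (i + 1)) hPjleA (hq1 (i + 1)) ?_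
      rw [hBcard]
      exact Nat.Coprime.mul_right (hcop (i + 1) i (hne1 i).symm)
        (hcop (i + 1) (i + 2) (hne3 i))
    have cAC : A ≠ Q := by
      refine hneq A Q M le_sup_left ?_ hMQcop
      rw [hMcard]; exact (hp i).one_lt
    have cAD : A ≠ P i :=
      hneq A (P i) (P (i + 1)) hPjleA (hq1 (i + 1)) (hcop (i + 1) i (hne1 i).symm)
    have cBC : B ≠ Q := by
      refine hneq B Q (P i) le_sup_left (hq1 i) ?_
      rw [hQcard]
      exact Nat.Coprime.mul_right (hcop i (i + 1) (hne1 i)) (hcop i (i + 2) (hne2 i))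
    have cBD : B ≠ P i :=
      hneq B (P i) (P (i + 2)) le_sup_right (hq1 (i + 2)) (hcop (i + 2) i (hne2 i).symm)
    have cCD : Q ≠ P i :=
      hneq Q (P i) (P (i + 1)) le_sup_left (hq1 (i + 1)) (hcop (i + 1) i (hne1 i).symm)
    -- edge products
    have eAB : (A : Set G) * (B : Set G) = Set.univ := by
      rw [← Subgroup.mul_normal A B, hAB, Subgroup.coe_top]
    have eBC : (B : Set G) * (Q : Set G) = Set.univ := by
      rw [← Subgroup.mul_normal B Q, hBC, Subgroup.coe_top]
    have eCD : (Q : Set G) * ((P i) : Set G) = Set.univ := by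
      rw [← Subgroup.mul_normal Q (P i), hCD, Subgroup.coe_top]
    have eDA : ((P i) : Set G) * (A : Set G) = Set.univ := by
      rw [← Subgroup.set_mul_normal_comm (A : Set G) (P i),
        ← Subgroup.mul_normal A (P i), hAD, Subgroup.coe_top]
    -- non-edges
    have nAC : (A : Set G) * (Q : Set G) ≠ Set.univ := by
      intro h
      have hsub : (Set.univ : Set G) ⊆ ↑(A ⊔ Q) := h ▸ mul_subset_sup' A Q
      have htopAQ : A ⊔ Q = ⊤ := Subgroup.coe_eq_univ.mp (Set.univ_subset_iff.mp hsub)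
      exact hAne ((sup_eq_left.mpr (le_sup_right : Q ≤ A)).symm.trans htopAQ)
    have nBD : (B : Set G) * ((P i) : Set G) ≠ Set.univ := by
      intro h
      have hsub : (Set.univ : Set G) ⊆ ↑(B ⊔ P i) := h ▸ mul_subset_sup' B (P i)
      have htopBD : B ⊔ P i = ⊤ := Subgroup.coe_eq_univ.mp (Set.univ_subset_iff.mp hsub)
      exact hBne ((sup_eq_left.mpr (le_sup_left : P i ≤ B)).symm.trans htopBD)
    exact hsf ⟨A, B, Q, P i, ⟨hAne, hAfr⟩, ⟨hBne, hBfr⟩, ⟨hCne, hCfr⟩, ⟨hDne, hDfr⟩,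
      cAB, cAC, cAD, cBC, cBD, cCD, eAB, eBC, eCD, eDA, nAC, nBD⟩
  -- final cardinality of G
  have hGfin : Nat.card G = p 0 * p 1 * p 2 := by
    have := hGcard' 0
    rw [hcardQ 0] at this
    have e1 : (0 : Fin 3) + 1 = 1 := rfl
    have e2 : (0 : Fin 3) + 2 = 2 := rfl
    rw [e1, e2] at this
    rw [this, hprime 0, hprime 1, hprime 2, mul_assoc]
  refine ⟨fun i => ⟨hprime i, hnorm i, ?_⟩, ?_, hGfin⟩
  · haveI : Fact (p i).Prime := ⟨hp i⟩
    exact isCyclic_of_prime_card (hprime i)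
  · -- G is cyclic
    have hx : ∀ i, ∃ g : G, g ∈ P i ∧ orderOf g = p i := by
      intro i
      haveI : Fact (p i).Prime := ⟨hp i⟩
      haveI : Fintype ↥(P i) := Fintype.ofFinite _
      obtain ⟨x, hxo⟩ := exists_prime_orderOf_dvd_card (G := ↥(P i)) (p i)
        (by rw [← Nat.card_eq_fintype_card, hprime i])
      exact ⟨(x : G), x.2, (Subgroup.orderOf_coe x).trans hxo⟩
    obtain ⟨g0, hg0m, hg0⟩ := hx 0
    obtain ⟨g1, hg1m, hg1⟩ := hx 1
    obtain ⟨g2, hg2m, hg2⟩ := hx 2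
    have hcomm : ∀ i j : Fin 3, i ≠ j → ∀ a ∈ P i, ∀ b ∈ P j, Commute a b := by
      intro i j hij a ha b hb
      exact Subgroup.commute_of_normal_of_disjoint _ _ (hnorm i) (hnorm j)
        (disjoint_iff.mpr (Subgroup.inf_eq_bot_of_coprime (hcop i j hij))) a b ha hb
    have c01 : Commute g0 g1 := hcomm 0 1 (by decide) g0 hg0m g1 hg1m
    have c02 : Commute g0 g2 := hcomm 0 2 (by decide) g0 hg0m g2 hg2m
    have c12 : Commute g1 g2 := hcomm 1 2 (by decide) g1 hg1m g2 hg2m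
    have cop12 : Nat.Coprime (p 1) (p 2) :=
      (Nat.coprime_primes (hp 1) (hp 2)).mpr
        (fun h => (by decide : (1 : Fin 3) ≠ 2) (hdist h))
    have cop01 : Nat.Coprime (p 0) (p 1) :=
      (Nat.coprime_primes (hp 0) (hp 1)).mpr
        (fun h => (by decide : (0 : Fin 3) ≠ 1) (hdist h))
    have cop02 : Nat.Coprime (p 0) (p 2) :=
      (Nat.coprime_primes (hp 0) (hp 2)).mpr
        (fun h => (by decide : (0 : Fin 3) ≠ 2) (hdist h))
    have h12 : orderOf (g1 * g2) = p 1 * p 2 := by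
      have := (Commute.orderOf_mul_eq_mul_orderOf_of_coprime c12
        (by rw [hg1, hg2]; exact cop12))
      rw [this, hg1, hg2]
    have hcom0 : Commute g0 (g1 * g2) := Commute.mul_right c01 c02
    have hord : orderOf (g0 * (g1 * g2)) = p 0 * (p 1 * p 2) := by
      have := (Commute.orderOf_mul_eq_mul_orderOf_of_coprime hcom0
        (by rw [hg0, h12]; exact Nat.Coprime.mul_right cop01 cop02))
      rw [this, hg0, h12]
    exact isCyclic_of_orderOf_eq_card _ (by rw [hord, hGfin, mul_assoc])
end

section
/- Let H be a finite non-abelian simple group admitting no proper factorization (i.e., H ≠ AB for all proper subgroups A, B of H), let p be a prime, and set G = H × C_p. Then every proper factorization G = XY of G satisfies (up to swapping X and Y): X = H × 1 and Y is a subgroup with π₁(Y) a proper subgroup of H and π₂(Y) = C_p, where πᵢ are the coordinate projections. -/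
open scoped Pointwise

private lemma himg {G K : Type*} [Group G] [Group K] (X Y : Subgroup G)
    (f : G →* K) (hf : Function.Surjective f)
    (hXY : (X : Set G) * (Y : Set G) = Set.univ) :
    (X.map f : Set K) * (Y.map f : Set K) = Set.univ := by
  rw [Subgroup.coe_map, Subgroup.coe_map, ← Set.image_mul, hXY, Set.image_univ,
    Set.range_eq_univ.2 hf]

/-- A proper subgroup of `H × C` with `H` simple non-abelian cannot surject onto both
factors, when `C` is commutative. -/
private lemma aux_not_both_surj {H C : Type*} [Group H] [IsSimpleGroup H] [CommGroup C]
    (hna : ∃ a b : H, a * b ≠ b * a) (X : Subgroup (H × C))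
    (h1 : X.map (MonoidHom.fst H C) = ⊤) (h2 : X.map (MonoidHom.snd H C) = ⊤) :
    X = ⊤ := by
  have hfst : ∀ h : H, ∃ x ∈ X, x.1 = h := by
    intro h
    have : h ∈ X.map (MonoidHom.fst H C) := h1 ▸ Subgroup.mem_top h
    simpa [Subgroup.mem_map] using this
  have hsnd : ∀ c : C, ∃ x ∈ X, x.2 = c := by
    intro c
    have : c ∈ X.map (MonoidHom.snd H C) := h2 ▸ Subgroup.mem_top c
    simpa [Subgroup.mem_map] using this
  set K : Subgroup H := X.comap (MonoidHom.inl H C) with hK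
  have hKmem : ∀ h : H, h ∈ K ↔ (h, (1 : C)) ∈ X := fun h => Iff.rfl
  have hKnormal : K.Normal := by
    constructor
    intro k hk h
    obtain ⟨x, hx, hx1⟩ := hfst h
    have hmem : x * (k, (1:C)) * x⁻¹ ∈ X := mul_mem (mul_mem hx ((hKmem k).1 hk)) (inv_mem hx)
    have he : x * (k, (1:C)) * x⁻¹ = (h * k * h⁻¹, (1:C)) := by
      ext
      · simp [hx1]
      · simp [mul_comm]
    rw [he] at hmem
    exact (hKmem _).2 hmem
  rcases hKnormal.eq_bot_or_eq_top with hKb | hKt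
  · exfalso
    have hinj : ∀ x ∈ X, ∀ y ∈ X, x.2 = y.2 → x = y := by
      intro x hx y hy hxy
      have hm : x * y⁻¹ ∈ X := mul_mem hx (inv_mem hy)
      have h2' : (x * y⁻¹).2 = 1 := by simp [hxy]
      have hK1 : (x * y⁻¹).1 ∈ K := by
        rw [hKmem, ← h2']
        exact hm
      rw [hKb, Subgroup.mem_bot] at hK1
      have : x * y⁻¹ = 1 := Prod.ext hK1 h2'
      exact eq_of_div_eq_one (by simpa [div_eq_mul_inv] using this)
    obtain ⟨a, b, hab⟩ := hna
    obtain ⟨x, hx, hx1⟩ := hfst a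
    obtain ⟨y, hy, hy1⟩ := hfst b
    apply hab
    have h' : x * y = y * x :=
      hinj _ (mul_mem hx hy) _ (mul_mem hy hx) (by simp [mul_comm])
    have := congrArg Prod.fst h'
    simpa [hx1, hy1] using this
  · rw [eq_top_iff]
    rintro ⟨h, c⟩ -
    obtain ⟨x, hx, hx2⟩ := hsnd c
    have h1X : (h * x.1⁻¹, (1:C)) ∈ X := (hKmem _).1 (hKt ▸ Subgroup.mem_top _)
    have hmem : (h * x.1⁻¹, (1:C)) * x ∈ X := mul_mem h1X hx
    have he : (h * x.1⁻¹, (1:C)) * x = (h, c) := by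
      ext
      · simp
      · simp [hx2]
    rwa [he] at hmem

theorem factorizations_of_simple_times_cyclic
    (H : Type*) [Group H] [Finite H] [IsSimpleGroup H]
    (hna : ∃ a b : H, a * b ≠ b * a)
    (hnofact : ∀ A B : Subgroup H, A ≠ ⊤ → B ≠ ⊤ →
      (A : Set H) * (B : Set H) ≠ Set.univ)
    (p : ℕ) (hp : p.Prime) :
    ∀ X Y : Subgroup (H × Multiplicative (ZMod p)), X ≠ ⊤ → Y ≠ ⊤ →
      (X : Set (H × Multiplicative (ZMod p))) * (Y : Set (H × Multiplicative (ZMod p))) =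
        Set.univ →
      (X = Subgroup.prod ⊤ ⊥ ∧
        Y.map (MonoidHom.fst H (Multiplicative (ZMod p))) ≠ ⊤ ∧
        Y.map (MonoidHom.snd H (Multiplicative (ZMod p))) = ⊤) ∨
      (Y = Subgroup.prod ⊤ ⊥ ∧
        X.map (MonoidHom.fst H (Multiplicative (ZMod p))) ≠ ⊤ ∧
        X.map (MonoidHom.snd H (Multiplicative (ZMod p))) = ⊤) := by
  haveI : Fact p.Prime := ⟨hp⟩
  set C := Multiplicative (ZMod p) with hC
  haveI : IsSimpleGroup C := isSimpleGroup_of_prime_card (p := p) (by simp [hC, Nat.card_zmod])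
  haveI : Fact (1 < p) := ⟨hp.one_lt⟩
  haveI : Nontrivial C := by
    rw [hC]
    infer_instance
  have hCsub : ∀ S : Subgroup C, S = ⊥ ∨ S = ⊤ := fun S =>
    S.normal_of_comm.eq_bot_or_eq_top
  have key : ∀ X Y : Subgroup (H × C), X ≠ ⊤ → Y ≠ ⊤ →
      (X : Set (H × C)) * (Y : Set (H × C)) = Set.univ →
      X.map (MonoidHom.fst H C) = ⊤ →
      (X = Subgroup.prod ⊤ ⊥ ∧
        Y.map (MonoidHom.fst H C) ≠ ⊤ ∧ Y.map (MonoidHom.snd H C) = ⊤) := by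
    intro X Y hX hY hXY hXfst
    have hXsnd : X.map (MonoidHom.snd H C) ≠ ⊤ := fun h =>
      hX (aux_not_both_surj hna X hXfst h)
    have hXsndb : X.map (MonoidHom.snd H C) = ⊥ := (hCsub _).resolve_right hXsnd
    have hsndprod := himg X Y (MonoidHom.snd H C) Prod.snd_surjective hXY
    rw [hXsndb] at hsndprod
    have hYsnd : Y.map (MonoidHom.snd H C) = ⊤ := by
      rcases hCsub (Y.map (MonoidHom.snd H C)) with hb | ht
      · exfalso
        rw [hb] at hsndprod
        simp only [Subgroup.coe_bot, Set.singleton_mul_singleton, one_mul] at hsndprod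
        have hall : ∀ x : C, x = 1 := fun x => by
          have hx : x ∈ ({1} : Set C) := hsndprod ▸ Set.mem_univ x
          simpa using hx
        obtain ⟨a, b, hab⟩ := exists_pair_ne C
        exact hab ((hall a).trans (hall b).symm)
      · exact ht
    have hXeq : X = Subgroup.prod ⊤ ⊥ := by
      apply le_antisymm
      · rintro ⟨h, c⟩ hx
        have hc : c ∈ X.map (MonoidHom.snd H C) := ⟨(h, c), hx, rfl⟩
        rw [hXsndb, Subgroup.mem_bot] at hc
        rw [Subgroup.mem_prod]
        exact ⟨Subgroup.mem_top h, hc⟩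
      · rintro ⟨h, c⟩ hhc
        rw [Subgroup.mem_prod] at hhc
        obtain ⟨-, hc⟩ := hhc
        rw [Subgroup.mem_bot] at hc
        have hh : h ∈ X.map (MonoidHom.fst H C) := hXfst ▸ Subgroup.mem_top h
        obtain ⟨x, hx, hx1⟩ := hh
        have hx2 : x.2 ∈ X.map (MonoidHom.snd H C) := ⟨x, hx, rfl⟩
        rw [hXsndb, Subgroup.mem_bot] at hx2
        have : x = (h, c) := Prod.ext hx1 (by rw [hx2, hc])
        exact this ▸ hx
    exact ⟨hXeq, fun hYfst => hY (aux_not_both_surj hna Y hYfst hYsnd), hYsnd⟩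
  intro X Y hX hY hXY
  have hfstprod := himg X Y (MonoidHom.fst H C) Prod.fst_surjective hXY
  have hor : X.map (MonoidHom.fst H C) = ⊤ ∨ Y.map (MonoidHom.fst H C) = ⊤ := by
    by_contra hcon
    push_neg at hcon
    exact hnofact _ _ hcon.1 hcon.2 hfstprod
  rcases hor with h | h
  · exact Or.inl (key X Y hX hY hXY h)
  · have hYX : (Y : Set (H × C)) * (X : Set (H × C)) = Set.univ := by
      have hinv := congrArg (fun s : Set (H × C) => s⁻¹) hXY
      simpa [mul_inv_rev, inv_coe_set] using hinv
    exact Or.inr (key Y X hY hX hYX h)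
end

section
/- Let G be a finite group such that F(G) is bipartite with bipartition (U, V) and has no isolated vertex. If H and K are proper subgroups of G not contained in Φ(G) with H ∈ U and K ∈ V, then H ∩ K ⊆ Φ(G). -/
open scoped Pointwise

theorem inter_le_frattini_of_bipartite
    (G : Type*) [Group G] [Finite G]
    (U V : Set (Subgroup G))
    -- the parts consist of vertices and partition the vertex set
    (hUV : ∀ H : Subgroup G, (H ∈ U ∨ H ∈ V) ↔ (H ≠ ⊤ ∧ ¬ H ≤ frattini G))
    (hdisj : Disjoint U V)
    -- every edge joins U to V
    (hbip : ∀ H K : Subgroup G, H ≠ ⊤ → ¬ H ≤ frattini G → K ≠ ⊤ → ¬ K ≤ frattini G →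
      (H : Set G) * (K : Set G) = Set.univ →
      (H ∈ U ∧ K ∈ V) ∨ (H ∈ V ∧ K ∈ U))
    -- no isolated vertex
    (hiso : ∀ H : Subgroup G, H ≠ ⊤ → ¬ H ≤ frattini G →
      ∃ K : Subgroup G, K ≠ ⊤ ∧ ¬ K ≤ frattini G ∧
        (H : Set G) * (K : Set G) = Set.univ) :
    ∀ H K : Subgroup G, H ≠ ⊤ → ¬ H ≤ frattini G → K ≠ ⊤ → ¬ K ≤ frattini G →
      H ∈ U → K ∈ V → H ⊓ K ≤ frattini G := by
  intro H K hHt hHf hKt hKf hHU hKV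
  by_contra hLf
  have hLt : H ⊓ K ≠ ⊤ := fun h => hHt (top_le_iff.mp (h ▸ inf_le_left))
  obtain ⟨M, hMt, hMf, hLM⟩ := hiso (H ⊓ K) hLt hLf
  have edge : ∀ N : Subgroup G, H ⊓ K ≤ N → (N : Set G) * (M : Set G) = Set.univ := by
    intro N hN
    apply Set.eq_univ_of_univ_subset
    rw [← hLM]
    exact Set.mul_subset_mul_right (SetLike.coe_subset_coe.mpr hN)
  have h1 := hbip H M hHt hHf hMt hMf (edge H inf_le_left)
  have h2 := hbip K M hKt hKf hMt hMf (edge K inf_le_right)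
  have hMV : M ∈ V := by
    rcases h1 with ⟨_, h⟩ | ⟨h, _⟩
    · exact h
    · exact absurd h (Set.disjoint_left.mp hdisj hHU)
  have hMU : M ∈ U := by
    rcases h2 with ⟨h, _⟩ | ⟨_, h⟩
    · exact absurd hKV (Set.disjoint_left.mp hdisj h)
    · exact h
  exact Set.disjoint_left.mp hdisj hMU hMV
end

section
/- Let G be a finite group whose factorization graph F(G) is bipartite with no isolated vertex and suppose d(G) = 2. Then G/Φ(G) ≅ C_p ⋊ C_q for distinct primes p and q, with every nontrivial proper subgroup of G/Φ(G) maximal. -/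
open scoped Pointwise

section Helpers

variable {G' H' : Type*} [Group G'] [Group H']

lemma mul_univ_of_le {A B C D : Subgroup G'} (hAC : A ≤ C) (hBD : B ≤ D)
    (h : (A : Set G') * (B : Set G') = Set.univ) :
    (C : Set G') * (D : Set G') = Set.univ :=
  Set.eq_univ_of_univ_subset (h ▸ Set.mul_subset_mul
    (SetLike.coe_subset_coe.mpr hAC) (SetLike.coe_subset_coe.mpr hBD))

lemma mul_comap_univ (φ : G' →* H') (hφ : Function.Surjective φ) {A B : Subgroup H'}
    (h : (A : Set H') * (B : Set H') = Set.univ) :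
    ((A.comap φ : Subgroup G') : Set G') * ((B.comap φ : Subgroup G') : Set G') = Set.univ := by
  apply Set.eq_univ_of_forall
  intro g
  have hg : φ g ∈ (A : Set H') * (B : Set H') := h ▸ Set.mem_univ _
  obtain ⟨a, ha, b, hb, hab⟩ := Set.mem_mul.mp hg
  obtain ⟨a₀, rfl⟩ := hφ a
  refine Set.mem_mul.mpr ⟨a₀, ha, a₀⁻¹ * g, ?_, by group⟩
  have : φ (a₀⁻¹ * g) = b := by
    rw [map_mul, map_inv, ← hab]; group
  simpa [Subgroup.mem_comap, this] using hb

lemma mul_map_univ (φ : G' →* H') (hφ : Function.Surjective φ) {A B : Subgroup G'}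
    (h : (A : Set G') * (B : Set G') = Set.univ) :
    ((A.map φ : Subgroup H') : Set H') * ((B.map φ : Subgroup H') : Set H') = Set.univ := by
  apply Set.eq_univ_of_forall
  intro x
  obtain ⟨g, rfl⟩ := hφ x
  have hg : g ∈ (A : Set G') * (B : Set G') := h ▸ Set.mem_univ _
  obtain ⟨a, ha, b, hb, rfl⟩ := Set.mem_mul.mp hg
  exact Set.mem_mul.mpr ⟨φ a, Subgroup.mem_map_of_mem φ ha, φ b,
    Subgroup.mem_map_of_mem φ hb, (map_mul φ a b).symm⟩

lemma triangle_contra {α : Type*} {U V : Set α} (hUV : Disjoint U V) {a b c : α}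
    (e1 : (a ∈ U ∧ b ∈ V) ∨ (a ∈ V ∧ b ∈ U))
    (e2 : (a ∈ U ∧ c ∈ V) ∨ (a ∈ V ∧ c ∈ U))
    (e3 : (b ∈ U ∧ c ∈ V) ∨ (b ∈ V ∧ c ∈ U)) : False := by
  have hd : ∀ x, x ∈ U → x ∈ V → False := fun x hx hy => Set.disjoint_left.mp hUV hx hy
  tauto

/-- A subgroup of prime order `l` and index equal to a smaller prime is normal. -/
lemma normal_of_large_prime {Γ : Type*} [Group Γ] [Finite Γ] {l s : ℕ}
    (hl : l.Prime) (_hs : s.Prime) (hlt : s < l)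
    (hcard : Nat.card Γ = l * s) {B : Subgroup Γ} (hB : Nat.card B = l) : B.Normal := by
  set N := B.normalCore with hN
  have hNle : N ≤ B := B.normalCore_le
  have hindexB : B.index = s := by
    have h1 : Nat.card B * B.index = Nat.card Γ := Subgroup.card_mul_index B
    rw [hB, hcard] at h1
    exact Nat.eq_of_mul_eq_mul_left hl.pos h1
  -- the index of the normal core divides s!
  have hdvd : N.index ∣ Nat.factorial s := by
    have hker : N = (MulAction.toPermHom Γ (Γ ⧸ B)).ker := B.normalCore_eq_ker
    have h1 : N.index = Nat.card (Γ ⧸ N) := Subgroup.index_eq_card N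
    have h2 : Nat.card (Γ ⧸ N) = Nat.card (MulAction.toPermHom Γ (Γ ⧸ B)).range := by
      rw [hker]
      exact Nat.card_congr (QuotientGroup.quotientKerEquivRange _).toEquiv
    have h3 : Nat.card (MulAction.toPermHom Γ (Γ ⧸ B)).range ∣
        Nat.card (Equiv.Perm (Γ ⧸ B)) :=
      Subgroup.card_subgroup_dvd_card _
    have h4 : Nat.card (Equiv.Perm (Γ ⧸ B)) = Nat.factorial s := by
      haveI : DecidableEq (Γ ⧸ B) := Classical.decEq _
      haveI : Fintype (Γ ⧸ B) := Fintype.ofFinite _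
      rw [Nat.card_eq_fintype_card, Fintype.card_perm, ← Nat.card_eq_fintype_card,
        ← Subgroup.index_eq_card, hindexB]
    rw [h1, h2, ← h4]
    exact h3
  have hl_dvd : l ∣ Nat.card N := by
    by_contra h
    have h1 : Nat.card N * N.index = l * s := (Subgroup.card_mul_index N).trans hcard
    have h2 : l ∣ Nat.card N * N.index := h1 ▸ Dvd.intro s rfl
    have h3 : l ∣ N.index := ((Nat.Prime.dvd_mul hl).mp h2).resolve_left h
    have h4 : l ∣ Nat.factorial s := h3.trans hdvd
    exact absurd ((Nat.Prime.dvd_factorial hl).mp h4) (not_le.mpr hlt)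
  have hNcard : Nat.card N = l :=
    Nat.dvd_antisymm (hB ▸ Subgroup.card_dvd_of_le hNle) hl_dvd
  have : N = B := Subgroup.eq_of_le_of_card_ge hNle (by rw [hB, hNcard])
  rw [← this]
  exact B.normalCore_normal

end Helpers

theorem quotient_frattini_structure_of_bipartite_two_generated
    (G : Type*) [Group G] [Finite G]
    -- d(G) = 2 : two-generated but not cyclic
    (htwo : ∃ a b : G, Subgroup.closure {a, b} = ⊤)
    (hnc : ¬ IsCyclic G)
    -- F(G) is bipartite with no isolated vertex
    (hbipartite : ∃ U V : Set (Subgroup G),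
      (∀ H : Subgroup G, (H ∈ U ∨ H ∈ V) ↔ (H ≠ ⊤ ∧ ¬ H ≤ frattini G)) ∧
      Disjoint U V ∧
      (∀ H K : Subgroup G, H ≠ ⊤ → ¬ H ≤ frattini G → K ≠ ⊤ → ¬ K ≤ frattini G →
        (H : Set G) * (K : Set G) = Set.univ →
        (H ∈ U ∧ K ∈ V) ∨ (H ∈ V ∧ K ∈ U)) ∧
      (∀ H : Subgroup G, H ≠ ⊤ → ¬ H ≤ frattini G →
        ∃ K : Subgroup G, K ≠ ⊤ ∧ ¬ K ≤ frattini G ∧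
          (H : Set G) * (K : Set G) = Set.univ)) :
    ∃ p q : ℕ, p.Prime ∧ q.Prime ∧ p ≠ q ∧
      (∃ P Q : Subgroup (G ⧸ frattini G),
        Nat.card P = p ∧ Nat.card Q = q ∧ P.Normal ∧ P ⊓ Q = ⊥ ∧ P ⊔ Q = ⊤) ∧
      (∀ H : Subgroup (G ⧸ frattini G), H ≠ ⊥ → H ≠ ⊤ → IsCoatom H) := by
  classical
  obtain ⟨U, V, hmemUV, hUV, hedge, hnbr⟩ := hbipartite
  set π : G →* G ⧸ frattini G := QuotientGroup.mk' (frattini G) with hπdef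
  have hπ : Function.Surjective π := QuotientGroup.mk'_surjective (frattini G)
  have hker : π.ker = frattini G := QuotientGroup.ker_mk' (frattini G)
  haveI : Finite (Subgroup G) :=
    Finite.of_injective (fun H => (H : Set G)) SetLike.coe_injective
  haveI : Finite (G ⧸ frattini G) := Quotient.finite _
  -- nongenerating property of the Frattini subgroup
  have hNONGEN : ∀ K : Subgroup G, K ⊔ frattini G = ⊤ → K = ⊤ := fun K h =>
    frattini_nongenerating h
  -- map of the kernel is trivial
  have map_ker_bot : Subgroup.map π π.ker = ⊥ :=
    le_bot_iff.mp (Subgroup.map_le_iff_le_comap.mpr (le_of_eq (MonoidHom.comap_bot π).symm))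
  -- comap of a proper subgroup is proper
  have comap_ne_top : ∀ {X : Subgroup (G ⧸ frattini G)}, X ≠ ⊤ → Subgroup.comap π X ≠ ⊤ := by
    intro X hX h
    apply hX
    have h1 := Subgroup.map_comap_eq_self_of_surjective hπ X
    rw [h] at h1
    rw [← h1]
    exact Subgroup.map_top_of_surjective π hπ
  -- comap of a nontrivial subgroup is not contained in the Frattini subgroup
  have comap_not_le : ∀ {X : Subgroup (G ⧸ frattini G)}, X ≠ ⊥ →
      ¬ Subgroup.comap π X ≤ frattini G := by
    intro X hX hle
    apply hX
    have h1 : Subgroup.comap π X ≤ π.ker := by rw [hker]; exact hle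
    have h2 : Subgroup.map π (Subgroup.comap π X) ≤ ⊥ :=
      map_ker_bot ▸ Subgroup.map_mono h1
    rw [Subgroup.map_comap_eq_self_of_surjective hπ X] at h2
    exact le_bot_iff.mp h2
  -- Intersection of adjacent subgroups in the quotient is trivial (triangle argument)
  have hINT : ∀ A B : Subgroup (G ⧸ frattini G), A ≠ ⊥ → A ≠ ⊤ → B ≠ ⊥ → B ≠ ⊤ →
      (A : Set (G ⧸ frattini G)) * (B : Set (G ⧸ frattini G)) = Set.univ → A ⊓ B = ⊥ := by
    intro A B hAbot hAtop hBbot hBtop hmul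
    set A' := Subgroup.comap π A with hA'
    set B' := Subgroup.comap π B with hB'
    have hA't : A' ≠ ⊤ := comap_ne_top hAtop
    have hB't : B' ≠ ⊤ := comap_ne_top hBtop
    have hA'f : ¬ A' ≤ frattini G := comap_not_le hAbot
    have hB'f : ¬ B' ≤ frattini G := comap_not_le hBbot
    have hmul' : (A' : Set G) * (B' : Set G) = Set.univ := mul_comap_univ π hπ hmul
    -- the intersection downstairs is contained in the Frattini subgroup
    have hint : A' ⊓ B' ≤ frattini G := by
      by_contra hcon
      have hCt : A' ⊓ B' ≠ ⊤ := fun h => hA't (top_le_iff.mp (h ▸ inf_le_left))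
      obtain ⟨L, hLt, hLf, hLmul⟩ := hnbr (A' ⊓ B') hCt hcon
      have hALmul : (A' : Set G) * (L : Set G) = Set.univ :=
        mul_univ_of_le inf_le_left le_rfl hLmul
      have hBLmul : (B' : Set G) * (L : Set G) = Set.univ :=
        mul_univ_of_le inf_le_right le_rfl hLmul
      exact triangle_contra hUV
        (hedge A' B' hA't hA'f hB't hB'f hmul')
        (hedge A' L hA't hA'f hLt hLf hALmul)
        (hedge B' L hB't hB'f hLt hLf hBLmul)
    -- push back up
    have h1 : Subgroup.comap π (A ⊓ B) ≤ π.ker := by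
      rw [Subgroup.comap_inf, hker]
      exact hint
    have h2 : Subgroup.map π (Subgroup.comap π (A ⊓ B)) ≤ ⊥ :=
      map_ker_bot ▸ Subgroup.map_mono h1
    rw [Subgroup.map_comap_eq_self_of_surjective hπ] at h2
    exact le_bot_iff.mp h2
  -- every nontrivial proper subgroup of the quotient has a neighbour in the quotient
  have hNEIGH : ∀ A : Subgroup (G ⧸ frattini G), A ≠ ⊥ → A ≠ ⊤ →
      ∃ B : Subgroup (G ⧸ frattini G), B ≠ ⊥ ∧ B ≠ ⊤ ∧
        (A : Set (G ⧸ frattini G)) * (B : Set (G ⧸ frattini G)) = Set.univ := by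
    intro A hAbot hAtop
    obtain ⟨K, hKt, hKf, hKmul⟩ :=
      hnbr (Subgroup.comap π A) (comap_ne_top hAtop) (comap_not_le hAbot)
    refine ⟨Subgroup.map π K, ?_, ?_, ?_⟩
    · intro h
      apply hKf
      have : K ≤ Subgroup.comap π (Subgroup.map π K) := Subgroup.le_comap_map π K
      rw [h, MonoidHom.comap_bot, hker] at this
      exact this
    · intro h
      apply hKt
      apply hNONGEN
      have h1 : Subgroup.comap π (Subgroup.map π K) = K ⊔ π.ker := Subgroup.comap_map_eq π K
      rw [h, Subgroup.comap_top, hker] at h1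
      exact h1.symm
    · have := mul_map_univ π hπ hKmul
      rwa [Subgroup.map_comap_eq_self_of_surjective hπ] at this
  -- every nontrivial proper subgroup of the quotient is maximal
  have hCOAT : ∀ H : Subgroup (G ⧸ frattini G), H ≠ ⊥ → H ≠ ⊤ → IsCoatom H := by
    intro A hAbot hAtop
    refine ⟨hAtop, fun M hAM => ?_⟩
    by_contra hMtop
    obtain ⟨B, hBbot, hBtop, hABmul⟩ := hNEIGH A hAbot hAtop
    have hMbot : M ≠ ⊥ := fun h => hAbot (le_bot_iff.mp (h ▸ hAM.le))
    have hMBmul : (M : Set (G ⧸ frattini G)) * (B : Set (G ⧸ frattini G)) = Set.univ :=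
      mul_univ_of_le hAM.le le_rfl hABmul
    have hABinf := hINT A B hAbot hAtop hBbot hBtop hABmul
    have hMBinf := hINT M B hMbot hMtop hBbot hBtop hMBmul
    have hABcard : Nat.card A * Nat.card B = Nat.card (G ⧸ frattini G) :=
      (Subgroup.isComplement'_of_disjoint_and_mul_eq_univ
        (disjoint_iff.mpr hABinf) hABmul).card_mul
    have hMBcard : Nat.card M * Nat.card B = Nat.card (G ⧸ frattini G) :=
      (Subgroup.isComplement'_of_disjoint_and_mul_eq_univ
        (disjoint_iff.mpr hMBinf) hMBmul).card_mul
    have hBpos : 0 < Nat.card B := Nat.card_pos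
    have hcard : Nat.card A = Nat.card M :=
      Nat.eq_of_mul_eq_mul_right hBpos (hABcard.trans hMBcard.symm)
    exact hAM.ne (Subgroup.eq_of_le_of_card_ge hAM.le (le_of_eq hcard.symm))
  -- the quotient is not cyclic
  have hNC : ¬ IsCyclic (G ⧸ frattini G) := by
    intro hcyc
    obtain ⟨g, hg⟩ := hcyc.exists_generator
    obtain ⟨g₀, rfl⟩ := hπ g
    apply hnc
    have hmap : Subgroup.map π (Subgroup.zpowers g₀) = ⊤ := by
      rw [MonoidHom.map_zpowers]
      exact (Subgroup.eq_top_iff' _).mpr hg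
    have h1 : Subgroup.comap π (Subgroup.map π (Subgroup.zpowers g₀)) =
        Subgroup.zpowers g₀ ⊔ π.ker := Subgroup.comap_map_eq π _
    rw [hmap, Subgroup.comap_top, hker] at h1
    have h2 : Subgroup.zpowers g₀ = ⊤ := hNONGEN _ h1.symm
    exact ⟨⟨g₀, fun x => (Subgroup.eq_top_iff' _).mp h2 x⟩⟩
  haveI hNT : Nontrivial (G ⧸ frattini G) := by
    by_contra h
    rw [not_nontrivial_iff_subsingleton] at h
    exact hNC (isCyclic_of_subsingleton)
  -- every nontrivial element has prime order, and generates a maximal subgroup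
  have hORD : ∀ z : G ⧸ frattini G, z ≠ 1 →
      (orderOf z).Prime ∧ IsCoatom (Subgroup.zpowers z) := by
    intro z hz
    have hZbot : Subgroup.zpowers z ≠ ⊥ := by
      rw [Ne, Subgroup.zpowers_eq_bot]; exact hz
    have hZtop : Subgroup.zpowers z ≠ ⊤ := by
      intro h
      exact hNC ⟨⟨z, fun x => (Subgroup.eq_top_iff' _).mp h x⟩⟩
    have hcoat := hCOAT _ hZbot hZtop
    refine ⟨?_, hcoat⟩
    set n := orderOf z with hn
    have hn0 : 0 < n := orderOf_pos z
    have hn1 : n ≠ 1 := fun h => hz (orderOf_eq_one_iff.mp h)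
    set r := n.minFac with hr
    have hrp : r.Prime := Nat.minFac_prime hn1
    have hrdvd : r ∣ n := Nat.minFac_dvd n
    set w := z ^ r with hw
    by_cases hw1 : w = 1
    · have : n ∣ r := orderOf_dvd_of_pow_eq_one hw1
      have heq : n = r := (Nat.Prime.eq_one_or_self_of_dvd hrp n this).resolve_left hn1
      rw [heq]; exact hrp
    · exfalso
      have hWbot : Subgroup.zpowers w ≠ ⊥ := by
        rw [Ne, Subgroup.zpowers_eq_bot]; exact hw1
      have hWle : Subgroup.zpowers w ≤ Subgroup.zpowers z :=
        Subgroup.zpowers_le.mpr (Subgroup.mem_zpowers_iff.mpr ⟨(r : ℤ), by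
          rw [zpow_natCast]⟩)
      have hWcoat := hCOAT _ hWbot (fun h => hZtop (top_le_iff.mp (h ▸ hWle)))
      have hWZ : Subgroup.zpowers w = Subgroup.zpowers z := by
        rcases eq_or_lt_of_le hWle with h | h
        · exact h
        · exact absurd (hWcoat.2 _ h) hZtop
      -- but w has smaller order
      have hwpow : w ^ (n / r) = 1 := by
        rw [hw, ← pow_mul, Nat.mul_div_cancel' hrdvd, hn]
        exact pow_orderOf_eq_one z
      have hworder : orderOf w ∣ n / r := orderOf_dvd_of_pow_eq_one hwpow
      have hcards : orderOf w = n := by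
        have h1 : Nat.card (Subgroup.zpowers w) = Nat.card (Subgroup.zpowers z) := by
          rw [hWZ]
        rw [Nat.card_zpowers, Nat.card_zpowers] at h1
        exact h1
      have hnr0 : 0 < n / r := Nat.div_pos (Nat.le_of_dvd hn0 hrdvd) hrp.pos
      have h2 : n ≤ n / r := Nat.le_of_dvd hnr0 (hcards ▸ hworder)
      have h3 : n / r < n := Nat.div_lt_self hn0 hrp.one_lt
      exact absurd h2 (not_le.mpr h3)
  -- pick a nontrivial element and its complement
  obtain ⟨z, hz⟩ := exists_ne (1 : G ⧸ frattini G)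
  obtain ⟨hqprime, hAcoat⟩ := hORD z hz
  set q := orderOf z with hqdef
  set A := Subgroup.zpowers z with hAdef
  have hAcard : Nat.card A = q := Nat.card_zpowers z
  have hAbot : A ≠ ⊥ := by rw [hAdef, Ne, Subgroup.zpowers_eq_bot]; exact hz
  have hAtop : A ≠ ⊤ := hAcoat.1
  obtain ⟨B, hBbot, hBtop, hABmul⟩ := hNEIGH A hAbot hAtop
  have hABinf : A ⊓ B = ⊥ := hINT A B hAbot hAtop hBbot hBtop hABmul
  have hcardG : q * Nat.card B = Nat.card (G ⧸ frattini G) := by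
    have := (Subgroup.isComplement'_of_disjoint_and_mul_eq_univ
      (disjoint_iff.mpr hABinf) hABmul).card_mul
    rwa [hAcard] at this
  -- B is generated by any of its nontrivial elements, and has prime order p
  obtain ⟨y, hyB, hy1⟩ : ∃ y ∈ B, y ≠ 1 := by
    by_contra h
    push_neg at h
    exact hBbot ((Subgroup.eq_bot_iff_forall B).mpr h)
  obtain ⟨hpprime, hYcoat⟩ := hORD y hy1
  set p := orderOf y with hpdef
  have hYB : Subgroup.zpowers y = B := by
    have hle : Subgroup.zpowers y ≤ B := Subgroup.zpowers_le.mpr hyB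
    rcases eq_or_lt_of_le hle with h | h
    · exact h
    · exact absurd (hYcoat.2 _ h) hBtop
  have hBcard : Nat.card B = p := by rw [← hYB, Nat.card_zpowers]
  have hBcoat : IsCoatom B := hYB ▸ hYcoat
  have hzA : z ∈ A := Subgroup.mem_zpowers z
  -- rule out p = q via a triangle in the graph
  have hpq : p ≠ q := by
    intro hpq
    have hcardG2 : Nat.card (G ⧸ frattini G) = q * q := by
      rw [← hcardG, hBcard, hpq]
    -- two distinct subgroups of order q intersect trivially and multiply to everything
    have hinfq : ∀ X Y : Subgroup (G ⧸ frattini G), Nat.card X = q → Nat.card Y = q →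
        X ≠ Y → X ⊓ Y = ⊥ := by
      intro X Y hX hY hne
      have hdvd : Nat.card (X ⊓ Y : Subgroup (G ⧸ frattini G)) ∣ q :=
        hX ▸ Subgroup.card_dvd_of_le inf_le_left
      rcases (Nat.Prime.eq_one_or_self_of_dvd hqprime _ hdvd) with h | h
      · exact Subgroup.card_eq_one.mp h
      · exfalso
        apply hne
        have h1 : X ⊓ Y = X :=
          Subgroup.eq_of_le_of_card_ge inf_le_left (by rw [hX, h])
        have h2 : X ⊓ Y = Y :=
          Subgroup.eq_of_le_of_card_ge inf_le_right (by rw [hY, h])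
        rw [← h1, h2]
      -- a third subgroup
    set w := z * y with hwdef
    have hw1 : w ≠ 1 := by
      intro h
      have hyA : y ∈ A := by
        have h' : z * y = 1 := h
        have hy' : y = z⁻¹ := eq_inv_of_mul_eq_one_right h'
        rw [hy']; exact A.inv_mem hzA
      have : y ∈ A ⊓ B := ⟨hyA, hyB⟩
      rw [hABinf] at this
      exact hy1 this
    obtain ⟨hrprime, hCcoat⟩ := hORD w hw1
    set C := Subgroup.zpowers w with hCdef
    have hCcard : Nat.card C = q := by
      have hr : Nat.card C = orderOf w := Nat.card_zpowers w
      have hdvd : orderOf w ∣ q * q := by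
        have h0 := Subgroup.card_subgroup_dvd_card C
        rwa [hr, hcardG2] at h0
      rcases (Nat.Prime.dvd_mul hrprime).mp hdvd with h | h <;>
        rw [hr, (Nat.prime_dvd_prime_iff_eq hrprime hqprime).mp h]
    have hAcard' : Nat.card A = q := hAcard
    have hBcard' : Nat.card B = q := by rw [hBcard, hpq]
    have hCA : C ≠ A := by
      intro h
      have hwA : w ∈ A := h ▸ Subgroup.mem_zpowers w
      have hyA : y ∈ A := by
        have : y = z⁻¹ * w := by rw [hwdef]; group
        rw [this]; exact A.mul_mem (A.inv_mem hzA) hwA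
      have : y ∈ A ⊓ B := ⟨hyA, hyB⟩
      rw [hABinf] at this
      exact hy1 this
    have hCB : C ≠ B := by
      intro h
      have hwB : w ∈ B := h ▸ Subgroup.mem_zpowers w
      have hzB : z ∈ B := by
        have : z = w * y⁻¹ := by rw [hwdef]; group
        rw [this]; exact B.mul_mem hwB (B.inv_mem hyB)
      have : z ∈ A ⊓ B := ⟨hzA, hzB⟩
      rw [hABinf] at this
      exact hz this
    have hACinf : A ⊓ C = ⊥ := hinfq A C hAcard' hCcard (fun h => hCA h.symm)
    have hBCinf : B ⊓ C = ⊥ := hinfq B C hBcard' hCcard (fun h => hCB h.symm)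
    have hACmul : (A : Set (G ⧸ frattini G)) * (C : Set (G ⧸ frattini G)) = Set.univ :=
      (Subgroup.isComplement'_of_card_mul_and_disjoint
        (by rw [hAcard', hCcard, hcardG2]) (disjoint_iff.mpr hACinf)).mul_eq
    have hBCmul : (B : Set (G ⧸ frattini G)) * (C : Set (G ⧸ frattini G)) = Set.univ :=
      (Subgroup.isComplement'_of_card_mul_and_disjoint
        (by rw [hBcard', hCcard, hcardG2]) (disjoint_iff.mpr hBCinf)).mul_eq
    -- transfer the triangle down to G
    have hCbot : C ≠ ⊥ := by rw [hCdef, Ne, Subgroup.zpowers_eq_bot]; exact hw1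
    have hCtop : C ≠ ⊤ := hCcoat.1
    exact triangle_contra hUV
      (hedge (Subgroup.comap π A) (Subgroup.comap π B)
        (comap_ne_top hAtop) (comap_not_le hAbot)
        (comap_ne_top hBtop) (comap_not_le hBbot) (mul_comap_univ π hπ hABmul))
      (hedge (Subgroup.comap π A) (Subgroup.comap π C)
        (comap_ne_top hAtop) (comap_not_le hAbot)
        (comap_ne_top hCtop) (comap_not_le hCbot) (mul_comap_univ π hπ hACmul))
      (hedge (Subgroup.comap π B) (Subgroup.comap π C)
        (comap_ne_top hBtop) (comap_not_le hBbot)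
        (comap_ne_top hCtop) (comap_not_le hCbot) (mul_comap_univ π hπ hBCmul))
  -- now p ≠ q; the subgroup of larger order is normal
  have hcardG' : Nat.card (G ⧸ frattini G) = q * p := by rw [← hcardG, hBcard]
  have hyBinf : y ∉ A := by
    intro hyA
    have : y ∈ A ⊓ B := ⟨hyA, hyB⟩
    rw [hABinf] at this
    exact hy1 this
  have hzAinf : z ∉ B := by
    intro hzB
    have : z ∈ A ⊓ B := ⟨hzA, hzB⟩
    rw [hABinf] at this
    exact hz this
  have hsupAB : A ⊔ B = ⊤ := by
    apply hAcoat.2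
    rcases eq_or_lt_of_le (le_sup_left : A ≤ A ⊔ B) with h | h
    · exact absurd (h ▸ le_sup_right : B ≤ A) (fun hle => hyBinf (hle hyB))
    · exact h
  rcases lt_or_gt_of_ne hpq with hlt | hlt
  · -- p < q : A (of order q) is normal
    have hAnormal : A.Normal :=
      normal_of_large_prime hqprime hpprime hlt hcardG' hAcard
    exact ⟨q, p, hqprime, hpprime, (Nat.ne_of_lt hlt).symm,
      ⟨A, B, hAcard, hBcard, hAnormal, hABinf, hsupAB⟩, hCOAT⟩
  · -- q < p : B (of order p) is normal
    have hBnormal : B.Normal :=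
      normal_of_large_prime hpprime hqprime hlt (by rw [hcardG', mul_comm]) hBcard
    refine ⟨p, q, hpprime, hqprime, Nat.ne_of_gt hlt, 
      ⟨B, A, hBcard, hAcard, hBnormal, ?_, ?_⟩, hCOAT⟩
    · rw [inf_comm]; exact hABinf
    · rw [sup_comm]; exact hsupAB
end
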